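/- arXiv:2309.04101 — 2 statements merged into one kernel-verified Lean document; each statement's English description precedes it below -/
import Mathlib

section
/- Let n ≥ 6 and let Γ' be a signed graph of order n that attains the maximum largest eigenvalue λ1 among all unbalanced, negative-C4-free signed graphs of order n, and suppose A(Γ') has a nonnegative unit eigenvector corresponding to λ1(Γ'). Then Γ' contains exactly one negative edge. -/
open scoped BigOperators

/-- A signed graph on the vertex set `Fin n`: a simple graph together with a
symmetric `±1` sign on each edge. -/
structure SignedGraph (n : ℕ) where
  G : SimpleGraph (Fin n)
  sign : Fin n → Fin n → ℤ
  sign_symm : ∀ i j, sign i j = sign j i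
  sign_pm : ∀ i j, G.Adj i j → sign i j = 1 ∨ sign i j = -1

namespace SignedGraph

variable {n : ℕ}

open Classical in
/-- The adjacency matrix of a signed graph, as a real matrix. -/
noncomputable def adjMatrix (Γ : SignedGraph n) : Matrix (Fin n) (Fin n) ℝ :=
  fun i j => if Γ.G.Adj i j then (Γ.sign i j : ℝ) else 0

/-- The largest eigenvalue (the index) of a signed graph. -/
noncomputable def lambda1 (Γ : SignedGraph n) : ℝ :=
  sSup (spectrum ℝ Γ.adjMatrix)

/-- The sign of an unordered edge. -/
def signEdge (Γ : SignedGraph n) : Sym2 (Fin n) → ℤ :=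
  Sym2.lift ⟨Γ.sign, Γ.sign_symm⟩

/-- The sign of a walk: the product of the signs of its edges. -/
def walkSign (Γ : SignedGraph n) {u v : Fin n} (w : Γ.G.Walk u v) : ℤ :=
  (w.edges.map Γ.signEdge).prod

/-- A negative cycle: a cycle whose sign is `-1`
(equivalently, with an odd number of negative edges). -/
def IsNegCycle (Γ : SignedGraph n) {u : Fin n} (c : Γ.G.Walk u u) : Prop :=
  c.IsCycle ∧ Γ.walkSign c = -1

/-- A signed graph is unbalanced if it contains a negative cycle. -/
def Unbalanced (Γ : SignedGraph n) : Prop :=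
  ∃ (u : Fin n) (c : Γ.G.Walk u u), Γ.IsNegCycle c

/-- A signed graph is negative-`C₄`-free if it contains no negative 4-cycle. -/
def NegC4Free (Γ : SignedGraph n) : Prop :=
  ∀ (u : Fin n) (c : Γ.G.Walk u u), c.IsCycle → c.length = 4 → Γ.walkSign c ≠ -1

end SignedGraph

/-- The signed graph `Γ₁`: vertices `2,…,n-1` induce an all-positive complete
graph, vertices `0` and `1` are joined to each other by a negative edge and to
vertex `2` by positive edges, and have no other neighbours. -/
def Gamma1 (n : ℕ) : SignedGraph n where
  G :=
    { Adj := fun i j => i ≠ j ∧ (2 ≤ min i.val j.val ∨ max i.val j.val ≤ 2)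
      symm := by
        constructor
        intro i j h
        refine ⟨Ne.symm h.1, ?_⟩
        rw [min_comm, max_comm]
        exact h.2
      loopless := by constructor; intro i h; exact h.1 rfl }
  sign := fun i j =>
    if (i.val = 0 ∧ j.val = 1) ∨ (i.val = 1 ∧ j.val = 0) then -1 else 1
  sign_symm := by
    intro i j
    try dsimp only
    by_cases h : (i.val = 0 ∧ j.val = 1) ∨ (i.val = 1 ∧ j.val = 0)
    · rw [if_pos h, if_pos (by tauto)]
    · rw [if_neg h, if_neg (by tauto)]
  sign_pm := by
    intro i j _
    try dsimp only
    by_cases h : (i.val = 0 ∧ j.val = 1) ∨ (i.val = 1 ∧ j.val = 0)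
    · rw [if_pos h]; right; rfl
    · rw [if_neg h]; left; rfl

/-- The signed graph `Γ₂`: vertices `4,…,n-1` induce an all-positive complete
graph, vertices `2` and `3` are joined by positive edges to all of `4,…,n-1`
(but not to each other), vertices `0` and `1` are joined to each other by a
negative edge and to `2` and `3` by positive edges, and have no other
neighbours. -/
def Gamma2 (n : ℕ) : SignedGraph n where
  G :=
    { Adj := fun i j => i ≠ j ∧
        ((i.val ≤ 1 ∧ j.val ≤ 3) ∨ (j.val ≤ 1 ∧ i.val ≤ 3) ∨
         (2 ≤ i.val ∧ i.val ≤ 3 ∧ 4 ≤ j.val) ∨ (2 ≤ j.val ∧ j.val ≤ 3 ∧ 4 ≤ i.val) ∨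
         (4 ≤ i.val ∧ 4 ≤ j.val))
      symm := by
        constructor
        intro i j h
        exact ⟨Ne.symm h.1, by tauto⟩
      loopless := by constructor; intro i h; exact h.1 rfl }
  sign := fun i j =>
    if (i.val = 0 ∧ j.val = 1) ∨ (i.val = 1 ∧ j.val = 0) then -1 else 1
  sign_symm := by
    intro i j
    try dsimp only
    by_cases h : (i.val = 0 ∧ j.val = 1) ∨ (i.val = 1 ∧ j.val = 0)
    · rw [if_pos h, if_pos (by tauto)]
    · rw [if_neg h, if_neg (by tauto)]
  sign_pm := by
    intro i j _
    try dsimp only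
    by_cases h : (i.val = 0 ∧ j.val = 1) ∨ (i.val = 1 ∧ j.val = 0)
    · rw [if_pos h]; right; rfl
    · rw [if_neg h]; left; rfl


/-- The all-negative complete signed graph `(K_n, -)`. -/
def NegKn (n : ℕ) : SignedGraph n where
  G := ⊤
  sign := fun _ _ => -1
  sign_symm := fun _ _ => rfl
  sign_pm := fun _ _ _ => Or.inr rfl

/-- `Γ` is switching equivalent to `Γ'` (up to a relabelling of the vertices):
there is a bijection of the vertices matching the underlying graphs and a
`±1`-valued switching function `s` relating the two sign functions. -/
def SwitchingEquiv {n : ℕ} (Γ Γ' : SignedGraph n) : Prop :=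
  ∃ e : Fin n ≃ Fin n, ∃ s : Fin n → ℤ, (∀ i, s i = 1 ∨ s i = -1) ∧
    (∀ i j, Γ.G.Adj i j ↔ Γ'.G.Adj (e i) (e j)) ∧
    (∀ i j, Γ.G.Adj i j → Γ.sign i j = s i * Γ'.sign (e i) (e j) * s j)

namespace SGAux
open Matrix Finset SimpleGraph

variable {n : ℕ}

def toE (x : Fin n → ℝ) : EuclideanSpace ℝ (Fin n) := WithLp.toLp 2 x

@[simp] lemma toE_apply (x : Fin n → ℝ) (i : Fin n) : toE x i = x i := rfl

lemma toE_smul (c : ℝ) (x : Fin n → ℝ) : toE (c • x) = c • toE x := rfl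

section spectral
variable [Nonempty (Fin n)] (A : Matrix (Fin n) (Fin n) ℝ) (hA : A.IsHermitian)

noncomputable def lmax : ℝ := Finset.univ.sup' Finset.univ_nonempty hA.eigenvalues

variable {A}

lemma repr_mulVec (x : Fin n → ℝ) (i : Fin n) :
    hA.eigenvectorBasis.repr (toE (A *ᵥ x)) i
      = hA.eigenvalues i * hA.eigenvectorBasis.repr (toE x) i := by
  set B := hA.eigenvectorBasis with hB
  set c : Fin n → ℝ := fun i => B.repr (toE x) i with hc
  have hmv : ∀ j, A *ᵥ (B j : EuclideanSpace ℝ (Fin n)) = hA.eigenvalues j • B j := fun j =>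
    hA.mulVec_eigenvectorBasis j
  have hxsum : toE x = ∑ j, c j • B j := (B.sum_repr _).symm
  have hAx : toE (A *ᵥ x) = ∑ j, (c j * hA.eigenvalues j) • B j := by
    have h1 : A *ᵥ x = A.mulVecLin (∑ j, c j • B j : EuclideanSpace ℝ (Fin n)) :=
      congrArg (fun v : EuclideanSpace ℝ (Fin n) => A.mulVecLin (show Fin n → ℝ from v)) hxsum
    have h2 : A.mulVecLin (∑ j, c j • B j : EuclideanSpace ℝ (Fin n))
        = ∑ j, (c j * hA.eigenvalues j) • B j := by
      have : (∑ j, c j • B j : EuclideanSpace ℝ (Fin n)) = ∑ j, c j • (B j : Fin n → ℝ) := by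
        rw [WithLp.ofLp_sum]; rfl
      rw [this, map_sum, WithLp.ofLp_sum]; simp only [WithLp.ofLp_smul]
      refine Finset.sum_congr rfl fun j _ => ?_
      rw [LinearMap.map_smul, Matrix.mulVecLin_apply, hmv j, smul_smul, mul_comm]
    exact congrArg (WithLp.toLp 2) (h1.trans h2)
  have horth := orthonormal_iff_ite.mp B.orthonormal
  rw [B.repr_apply_apply, hAx, inner_sum]
  simp only [real_inner_smul_right]
  rw [Finset.sum_eq_single i]
  · rw [horth i i, if_pos rfl, mul_one]
    ring
  · intro j _ hj
    rw [horth i j, if_neg (Ne.symm hj), mul_zero]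
  · simp

lemma quad_eq (x : Fin n → ℝ) :
    x ⬝ᵥ (A *ᵥ x) = ∑ i, hA.eigenvalues i * (hA.eigenvectorBasis.repr (toE x) i)^2 := by
  have hdot : x ⬝ᵥ (A *ᵥ x) = (inner ℝ (toE x) (toE (A *ᵥ x)) : ℝ) := by
    rw [PiLp.inner_apply]
    simp [dotProduct, RCLike.inner_apply, mul_comm]
  rw [hdot, ← hA.eigenvectorBasis.repr.inner_map_map (toE x) (toE (A *ᵥ x)), PiLp.inner_apply]
  refine Finset.sum_congr rfl fun i _ => ?_
  rw [repr_mulVec hA x i]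
  simp [RCLike.inner_apply]
  ring

lemma norm_eq (x : Fin n → ℝ) :
    ∑ i, (hA.eigenvectorBasis.repr (toE x) i)^2 = ∑ i, x i ^ 2 := by
  have := hA.eigenvectorBasis.repr.inner_map_map (toE x) (toE x)
  rw [PiLp.inner_apply, PiLp.inner_apply] at this
  simp only [RCLike.inner_apply, starRingEnd_apply, star_trivial] at this
  calc ∑ i, (hA.eigenvectorBasis.repr (toE x) i)^2
      = ∑ i, (hA.eigenvectorBasis.repr (toE x) i) * (hA.eigenvectorBasis.repr (toE x) i) := by
        refine Finset.sum_congr rfl fun i _ => by ring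
    _ = ∑ i, (toE x i) * (toE x i) := this
    _ = ∑ i, x i ^ 2 := by refine Finset.sum_congr rfl fun i _ => by simp [sq]

lemma rayleigh_le (x : Fin n → ℝ) :
    x ⬝ᵥ (A *ᵥ x) ≤ lmax A hA * (∑ i, x i ^ 2) := by
  rw [quad_eq hA x, ← norm_eq hA x, Finset.mul_sum]
  refine Finset.sum_le_sum fun i _ => ?_
  have h1 : hA.eigenvalues i ≤ lmax A hA := Finset.le_sup' _ (Finset.mem_univ i)
  have h2 : (0:ℝ) ≤ (hA.eigenvectorBasis.repr (toE x) i)^2 := sq_nonneg _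
  nlinarith

lemma rayleigh_eq_imp (x : Fin n → ℝ) (hx2 : ∑ i, x i ^ 2 = 1)
    (h : x ⬝ᵥ (A *ᵥ x) = lmax A hA) : A *ᵥ x = lmax A hA • x := by
  set B := hA.eigenvectorBasis with hB
  have hsum0 : ∑ i, (lmax A hA - hA.eigenvalues i) * (B.repr (toE x) i)^2 = 0 := by
    have hq := quad_eq hA x
    have hn := norm_eq hA x
    rw [hx2] at hn
    rw [h] at hq
    have hexp : ∑ i, (lmax A hA - hA.eigenvalues i) * (B.repr (toE x) i)^2
        = lmax A hA * (∑ i, (B.repr (toE x) i)^2)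
          - ∑ i, hA.eigenvalues i * (B.repr (toE x) i)^2 := by
      rw [Finset.mul_sum, ← Finset.sum_sub_distrib]
      refine Finset.sum_congr rfl fun i _ => by ring
    rw [hexp, hn, ← hq, mul_one, sub_eq_zero]
  have hterms : ∀ i ∈ Finset.univ, (0:ℝ) ≤ (lmax A hA - hA.eigenvalues i) * (B.repr (toE x) i)^2 := by
    intro i _
    have h1 : hA.eigenvalues i ≤ lmax A hA := Finset.le_sup' _ (Finset.mem_univ i)
    have h2 : (0:ℝ) ≤ (B.repr (toE x) i)^2 := sq_nonneg _
    nlinarith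
  have hzero := (Finset.sum_eq_zero_iff_of_nonneg hterms).mp hsum0
  have hreprEq : B.repr (toE (A *ᵥ x)) = B.repr (toE (lmax A hA • x)) := by
    ext i
    rw [repr_mulVec hA x i, toE_smul, _root_.map_smul]
    have ht := hzero i (Finset.mem_univ i)
    have hcase : hA.eigenvalues i * (B.repr (toE x) i) = lmax A hA * (B.repr (toE x) i) := by
      rcases eq_or_ne (B.repr (toE x) i) 0 with h0 | h0
      · rw [h0]; ring
      · have h2 : (B.repr (toE x) i)^2 ≠ 0 := pow_ne_zero _ h0
        have h3 : lmax A hA - hA.eigenvalues i = 0 := by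
          rcases mul_eq_zero.mp ht with h3 | h3
          · exact h3
          · exact absurd h3 h2
        have h4 : hA.eigenvalues i = lmax A hA := by linarith
        rw [h4]
    show hA.eigenvalues i * B.repr (toE x) i = (lmax A hA • B.repr (toE x)) i
    rw [hcase]
    simp
  exact congrArg (fun (v : EuclideanSpace ℝ (Fin n)) => (v : Fin n → ℝ)) (B.repr.injective hreprEq)

lemma exists_eigenvec_of_mem_spectrum {μ : ℝ} (h : μ ∈ spectrum ℝ A) :
    ∃ v : Fin n → ℝ, v ≠ 0 ∧ A *ᵥ v = μ • v := by
  rw [spectrum.mem_iff, Algebra.algebraMap_eq_smul_one, Matrix.isUnit_iff_isUnit_det,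
    isUnit_iff_ne_zero, not_not, ← Matrix.exists_mulVec_eq_zero_iff] at h
  obtain ⟨v, hv, hveq⟩ := h
  refine ⟨v, hv, ?_⟩
  rw [Matrix.sub_mulVec, Matrix.smul_mulVec, Matrix.one_mulVec, sub_eq_zero] at hveq
  rw [hveq]

lemma spectrum_le_lmax {μ : ℝ} (h : μ ∈ spectrum ℝ A) : μ ≤ lmax A hA := by
  obtain ⟨v, hv, hveq⟩ := exists_eigenvec_of_mem_spectrum h
  have hsum : 0 < ∑ i, v i ^ 2 := by
    rcases Function.ne_iff.mp hv with ⟨i, hi⟩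
    have h0 : 0 < v i ^ 2 := lt_of_le_of_ne (sq_nonneg _) (Ne.symm (pow_ne_zero 2 hi))
    have hle : v i ^ 2 ≤ ∑ j, v j ^ 2 :=
      Finset.single_le_sum (fun j _ => sq_nonneg (v j)) (Finset.mem_univ i)
    linarith
  have h1 : v ⬝ᵥ (A *ᵥ v) = μ * ∑ i, v i ^ 2 := by
    rw [hveq, Finset.mul_sum]
    simp only [dotProduct, Pi.smul_apply, smul_eq_mul]
    refine Finset.sum_congr rfl fun i _ => by ring
  have h2 := rayleigh_le hA v
  rw [h1] at h2
  nlinarith [h2, hsum]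

lemma lmax_mem_spectrum : lmax A hA ∈ spectrum ℝ A := by
  obtain ⟨i, _, hi⟩ := Finset.exists_mem_eq_sup' (Finset.univ_nonempty (α := Fin n)) hA.eigenvalues
  rw [lmax, hi]
  exact hA.eigenvalues_mem_spectrum_real i

lemma sSup_spectrum_eq : sSup (spectrum ℝ A) = lmax A hA := by
  apply le_antisymm
  · exact csSup_le ⟨_, lmax_mem_spectrum hA⟩ (fun μ hμ => spectrum_le_lmax hA hμ)
  · exact le_csSup ⟨lmax A hA, fun μ hμ => spectrum_le_lmax hA hμ⟩ (lmax_mem_spectrum hA)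

end spectral
end SGAux

namespace SGAux
open Matrix Finset SimpleGraph
open SimpleGraph

variable {n : ℕ}

lemma signEdge_pm (Γ : SignedGraph n) {e : Sym2 (Fin n)} (he : e ∈ Γ.G.edgeSet) :
    Γ.signEdge e = 1 ∨ Γ.signEdge e = -1 := by
  induction e with
  | _ i j => exact Γ.sign_pm i j he

@[simp] lemma signEdge_mk (Γ : SignedGraph n) (i j : Fin n) :
    Γ.signEdge s(i, j) = Γ.sign i j := rfl

@[simp] lemma walkSign_nil (Γ : SignedGraph n) {v : Fin n} :
    Γ.walkSign (SimpleGraph.Walk.nil : Γ.G.Walk v v) = 1 := by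
  simp [SignedGraph.walkSign]

lemma walkSign_cons (Γ : SignedGraph n) {u v w : Fin n} (h : Γ.G.Adj u v) (p : Γ.G.Walk v w) :
    Γ.walkSign (SimpleGraph.Walk.cons h p) = Γ.signEdge s(u, v) * Γ.walkSign p := by
  simp [SignedGraph.walkSign]

lemma walkSign_append (Γ : SignedGraph n) {u v w : Fin n} (p : Γ.G.Walk u v) (q : Γ.G.Walk v w) :
    Γ.walkSign (p.append q) = Γ.walkSign p * Γ.walkSign q := by
  simp [SignedGraph.walkSign, SimpleGraph.Walk.edges_append]

lemma walkSign_reverse (Γ : SignedGraph n) {u v : Fin n} (p : Γ.G.Walk u v) :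
    Γ.walkSign p.reverse = Γ.walkSign p := by
  simp [SignedGraph.walkSign, SimpleGraph.Walk.edges_reverse, List.map_reverse,
    List.prod_reverse]

lemma walkSign_pm (Γ : SignedGraph n) {u v : Fin n} (p : Γ.G.Walk u v) :
    Γ.walkSign p = 1 ∨ Γ.walkSign p = -1 := by
  induction p with
  | nil => left; simp
  | cons h q ih =>
    rw [walkSign_cons]
    rcases signEdge_pm Γ (Γ.G.mem_edgeSet.mpr h) with h1 | h1 <;>
      rcases ih with h2 | h2 <;> simp [h1, h2]

lemma exists_neg_edge_of_walkSign_neg (Γ : SignedGraph n) {u v : Fin n} (p : Γ.G.Walk u v)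
    (hs : Γ.walkSign p = -1) : ∃ e ∈ p.edges, Γ.signEdge e = -1 := by
  induction p with
  | nil => simp [SignedGraph.walkSign] at hs
  | cons h q ih =>
    rw [walkSign_cons] at hs
    rcases signEdge_pm Γ (Γ.G.mem_edgeSet.mpr h) with h1 | h1
    · rw [h1, one_mul] at hs
      obtain ⟨e, he, hse⟩ := ih hs
      exact ⟨e, by simp [he], hse⟩
    · exact ⟨_, by simp, h1⟩

/-- A closed walk with no duplicate vertices is nil. -/
lemma closed_nodup_nil {G : SimpleGraph (Fin n)} {v : Fin n} (q : G.Walk v v)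
    (h : q.support.Nodup) : q = SimpleGraph.Walk.nil := by
  cases q with
  | nil => rfl
  | cons h2 r =>
    exfalso
    rw [SimpleGraph.Walk.support_cons, List.nodup_cons] at h
    exact h.1 (SimpleGraph.Walk.end_mem_support r)

/-- In a walk with no duplicate vertices, an edge containing the final vertex is the last edge. -/
lemma path_end_edge {G : SimpleGraph (Fin n)} :
    ∀ {w v : Fin n} (q : G.Walk w v), q.support.Nodup → ∀ (b : Fin n), s(b, v) ∈ q.edges →
      ∃ (q' : G.Walk w b) (h : G.Adj b v), q = q'.concat h ∧ s(b, v) ∉ q'.edges := by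
  intro w v q
  induction q with
  | nil => intro _ b hb; simp at hb
  | @cons w w₂ v h rest ih =>
    intro hnd b hb
    have hnd' : rest.support.Nodup := by
      rw [SimpleGraph.Walk.support_cons, List.nodup_cons] at hnd
      exact hnd.2
    rw [SimpleGraph.Walk.edges_cons, List.mem_cons] at hb
    rcases hb with hb | hb
    · rw [Sym2.eq_iff] at hb
      rcases hb with ⟨rfl, rfl⟩ | ⟨rfl, rfl⟩
      · -- b = w, v = w₂ : rest is a closed walk with nodup support ⇒ nil
        have hrest := closed_nodup_nil rest hnd'
        subst hrest
        exact ⟨SimpleGraph.Walk.nil, h, (SimpleGraph.Walk.concat_nil h).symm, by simp⟩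
      · -- b = w₂, v = w : closed cons walk with nodup support: contradiction
        exfalso
        rw [SimpleGraph.Walk.support_cons, List.nodup_cons] at hnd
        exact hnd.1 (SimpleGraph.Walk.end_mem_support rest)
    · obtain ⟨q', h', hq', hne⟩ := ih hnd' b hb
      refine ⟨SimpleGraph.Walk.cons h q', h', ?_, ?_⟩
      · rw [hq', SimpleGraph.Walk.concat_cons]
      · rw [SimpleGraph.Walk.edges_cons, List.mem_cons]
        rintro (he | he)
        · rw [Sym2.eq_iff] at he
          rcases he with ⟨rfl, rfl⟩ | ⟨rfl, rfl⟩
          · -- b = w, v = w₂: rest is closed with nodup support ⇒ nil, but hb says it has an edge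
            have hrest := closed_nodup_nil rest hnd'
            rw [hrest] at hb
            simp at hb
          · -- b = w₂, v = w: outer walk closed, support dup
            rw [SimpleGraph.Walk.support_cons, List.nodup_cons] at hnd
            exact hnd.1 (SimpleGraph.Walk.end_mem_support rest)
        · exact hne he

end SGAux

namespace SGAux
open Matrix Finset SimpleGraph
open SimpleGraph

variable {n : ℕ}

/-- In a balanced signed graph, every closed walk has sign `1`. -/
lemma closed_walk_sign_one (H : SignedGraph n) (hb : ¬ H.Unbalanced) :
    ∀ (L : ℕ) ⦃v : Fin n⦄ (w : H.G.Walk v v), w.length ≤ L → H.walkSign w = 1 := by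
  intro L
  induction L with
  | zero =>
    intro v w hw
    cases w with
    | nil => simp
    | cons h p => simp at hw
  | succ L ih =>
    intro v w hlen
    cases w with
    | nil => simp
    | @cons _ b _ h p =>
      by_cases hnd : p.support.Nodup
      · -- The walk is essentially simple
        cases p with
        | nil => exact absurd h (H.G.loopless.irrefl v)
        | @cons _ z _ h2 q =>
          cases q with
          | nil =>
            -- length-2 closed walk: sign = σ(v,b)² = 1
            rw [walkSign_cons, walkSign_cons, walkSign_nil, mul_one]
            have : s(b, v) = s(v, b) := Sym2.eq_swap
            rw [this]
            rcases signEdge_pm H (H.G.mem_edgeSet.mpr h) with h1 | h1 <;> rw [h1] <;> norm_num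
          | cons h3 r =>
            -- length ≥ 3 simple closed walk: it is a cycle
            have hpath : (Walk.cons h2 (Walk.cons h3 r)).IsPath := Walk.IsPath.mk' hnd
            have hne : s(v, b) ∉ (Walk.cons h2 (Walk.cons h3 r)).edges := by
              intro hmem
              have hswap : s(b, v) ∈ (Walk.cons h2 (Walk.cons h3 r)).edges := by
                rwa [Sym2.eq_swap] at hmem
              obtain ⟨q', h', hq', -⟩ := path_end_edge _ hnd b hswap
              have hlen1 : (Walk.cons h2 (Walk.cons h3 r)).length = q'.length + 1 := by
                rw [hq']
                simp [Walk.concat]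
              have hq'nil : q' = Walk.nil := by
                apply closed_nodup_nil
                have : (q'.concat h').support.Nodup := hq' ▸ hnd
                rw [Walk.support_concat] at this
                exact (List.nodup_append.mp (by simpa using this)).1
              rw [hq'nil] at hlen1
              simp [Walk.length_cons] at hlen1
            have hcyc : (Walk.cons h (Walk.cons h2 (Walk.cons h3 r))).IsCycle :=
              (Walk.cons_isCycle_iff _ h).mpr ⟨hpath, hne⟩
            rcases walkSign_pm H (Walk.cons h (Walk.cons h2 (Walk.cons h3 r))) with h1 | h1
            · exact h1
            · exact absurd ⟨v, _, hcyc, h1⟩ hb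
      · -- duplicate vertex inside p: split off a shorter closed walk
        obtain ⟨u, hdup⟩ := List.exists_duplicate_iff_not_nodup.mpr hnd
        have hcount : 2 ≤ p.support.count u := List.duplicate_iff_two_le_count.mp hdup
        have hu : u ∈ p.support := hdup.mem
        set t₁ := p.takeUntil u hu with ht₁
        set d₁ := p.dropUntil u hu with hd₁
        have hspec : t₁.append d₁ = p := Walk.take_spec p hu
        have hcount1 : t₁.support.count u = 1 := Walk.count_support_takeUntil_eq_one p hu
        have hcount2 : 1 ≤ d₁.support.tail.count u := by
          have : p.support = t₁.support ++ d₁.support.tail := by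
            rw [← hspec, Walk.support_append]
          rw [this, List.count_append, hcount1] at hcount
          omega
        have hu2 : u ∈ d₁.support.tail := List.one_le_count_iff.mp hcount2
        -- d₁ : Walk u v with u in its tail
        cases hd : d₁ with
        | nil =>
          exfalso
          rw [hd] at hu2
          simp at hu2
        | @cons _ z _ h₂ q =>
          have hu3 : u ∈ q.support := by
            rw [hd] at hu2
            simpa using hu2
          set qt := q.takeUntil u hu3 with hqt
          set qd := q.dropUntil u hu3 with hqd
          have hqspec : qt.append qd = q := Walk.take_spec q hu3
          -- B : closed walk at u, R : closed walk at v
          set B := Walk.cons h₂ qt with hB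
          set R := (Walk.cons h t₁).append qd with hR
          have hlenw : (Walk.cons h p).length = B.length + R.length := by
            rw [hB, hR]
            have h1 : p.length = t₁.length + d₁.length := by
              rw [← hspec, Walk.length_append]
            have h2 : d₁.length = 1 + q.length := by rw [hd]; simp [Walk.length_cons]; omega
            have h3 : q.length = qt.length + qd.length := by
              rw [← hqspec, Walk.length_append]
            simp [Walk.length_cons, Walk.length_append]
            omega
          have hsign : H.walkSign (Walk.cons h p) = H.walkSign B * H.walkSign R := by
            rw [hB, hR, walkSign_cons, walkSign_append, walkSign_cons]
            have hps : H.walkSign p = H.walkSign t₁ * H.walkSign d₁ := by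
              rw [← hspec, walkSign_append]
            have hds : H.walkSign d₁ = H.signEdge s(u, z) * H.walkSign q := by
              rw [hd, walkSign_cons]
            have hqs : H.walkSign q = H.walkSign qt * H.walkSign qd := by
              rw [← hqspec, walkSign_append]
            rw [walkSign_cons, hps, hds, hqs]
            ring
          have hBlen : B.length ≤ L := by
            have hB1 : 1 ≤ B.length := by rw [hB]; simp [Walk.length_cons]
            have hR1 : 1 ≤ R.length := by
              rw [hR]
              simp [Walk.length_append, Walk.length_cons]
            omega
          have hRlen : R.length ≤ L := by
            have hB1 : 1 ≤ B.length := by rw [hB]; simp [Walk.length_cons]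
            omega
          rw [hsign, ih B hBlen, ih R hRlen, mul_one]

/-- In a balanced signed graph, any two walks with the same endpoints have the same sign. -/
lemma walkSign_eq_of_balanced (H : SignedGraph n) (hb : ¬ H.Unbalanced) {a b : Fin n}
    (w₁ w₂ : H.G.Walk a b) : H.walkSign w₁ = H.walkSign w₂ := by
  have h := closed_walk_sign_one H hb (w₁.append w₂.reverse).length (w₁.append w₂.reverse) le_rfl
  rw [walkSign_append, walkSign_reverse] at h
  rcases walkSign_pm H w₁ with h1 | h1 <;> rcases walkSign_pm H w₂ with h2 | h2 <;>
    rw [h1, h2] at h ⊢ <;> norm_num at h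

end SGAux

namespace SGAux
open Matrix Finset SimpleGraph
open Matrix

variable {n : ℕ}

lemma adj_herm (Γ : SignedGraph n) : Γ.adjMatrix.IsHermitian := by
  unfold Matrix.IsHermitian
  ext i j
  simp only [Matrix.conjTranspose_apply, RCLike.star_def, starRingEnd_apply, star_trivial]
  unfold SignedGraph.adjMatrix
  by_cases h : Γ.G.Adj i j
  · rw [if_pos h, if_pos (Γ.G.adj_symm h), Γ.sign_symm j i]
  · rw [if_neg h, if_neg (fun h' => h (Γ.G.adj_symm h'))]

lemma quad_expand (A : Matrix (Fin n) (Fin n) ℝ) (x : Fin n → ℝ) :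
    x ⬝ᵥ (A *ᵥ x) = ∑ i, ∑ j, A i j * (x i * x j) := by
  simp only [dotProduct, Matrix.mulVec, dotProduct, Finset.mul_sum]
  refine Finset.sum_congr rfl fun i _ => Finset.sum_congr rfl fun j _ => by ring

lemma quad_mono {A₁ A₂ : Matrix (Fin n) (Fin n) ℝ} {x : Fin n → ℝ}
    (h : ∀ i j, A₁ i j * (x i * x j) ≤ A₂ i j * (x i * x j)) :
    x ⬝ᵥ (A₁ *ᵥ x) ≤ x ⬝ᵥ (A₂ *ᵥ x) := by
  rw [quad_expand, quad_expand]
  exact Finset.sum_le_sum fun i _ => Finset.sum_le_sum fun j _ => h i j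

lemma quad_lambda1 (Γ' : SignedGraph n) (x : Fin n → ℝ)
    (hx : Γ'.adjMatrix.mulVec x = Γ'.lambda1 • x) (hunit : ∑ i, x i ^ 2 = 1) :
    x ⬝ᵥ (Γ'.adjMatrix *ᵥ x) = Γ'.lambda1 := by
  rw [hx]
  have : x ⬝ᵥ (Γ'.lambda1 • x) = Γ'.lambda1 * ∑ i, x i ^ 2 := by
    simp only [dotProduct, Pi.smul_apply, smul_eq_mul, Finset.mul_sum]
    exact Finset.sum_congr rfl fun i _ => by ring
  rw [this, hunit, mul_one]

end SGAux


namespace SGAux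
open Matrix Finset SimpleGraph

variable {n : ℕ}

lemma lambda1_eq_lmax [Nonempty (Fin n)] (Γ : SignedGraph n) :
    Γ.lambda1 = lmax Γ.adjMatrix (adj_herm Γ) :=
  sSup_spectrum_eq (adj_herm Γ)

/-- The master competitor principle: any unbalanced negative-C4-free competitor whose
Rayleigh quotient at `x` is at least `λ₁(Γ')` has `x` as a `λ₁(Γ')`-eigenvector. -/
lemma competitor_eigen [Nonempty (Fin n)] (Γ' Γc : SignedGraph n)
    (hmax : ∀ Γ : SignedGraph n, Γ.Unbalanced → Γ.NegC4Free → Γ.lambda1 ≤ Γ'.lambda1)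
    (x : Fin n → ℝ) (hunit : ∑ i, x i ^ 2 = 1)
    (hubc : Γc.Unbalanced) (hfreec : Γc.NegC4Free)
    (hR : Γ'.lambda1 ≤ x ⬝ᵥ (Γc.adjMatrix *ᵥ x)) :
    Γc.adjMatrix.mulVec x = Γ'.lambda1 • x := by
  have h1 : x ⬝ᵥ (Γc.adjMatrix *ᵥ x) ≤ lmax Γc.adjMatrix (adj_herm Γc) := by
    have h := rayleigh_le (adj_herm Γc) x
    rw [hunit, mul_one] at h
    exact h
  have h2 : lmax Γc.adjMatrix (adj_herm Γc) = Γc.lambda1 := (lambda1_eq_lmax Γc).symm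
  have h3 : Γc.lambda1 ≤ Γ'.lambda1 := hmax Γc hubc hfreec
  have h4 : x ⬝ᵥ (Γc.adjMatrix *ᵥ x) = lmax Γc.adjMatrix (adj_herm Γc) :=
    le_antisymm h1 (by linarith)
  have h5 := rayleigh_eq_imp (adj_herm Γc) x hunit h4
  have h6 : lmax Γc.adjMatrix (adj_herm Γc) = Γ'.lambda1 :=
    le_antisymm (by rw [h2]; exact h3) (le_trans hR h1)
  rw [h5, h6]

lemma row_diff_zero {A₁ A₂ : Matrix (Fin n) (Fin n) ℝ} {x : Fin n → ℝ} {lam : ℝ}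
    (h₁ : A₁ *ᵥ x = lam • x) (h₂ : A₂ *ᵥ x = lam • x) (i : Fin n) :
    ∑ j, (A₂ i j - A₁ i j) * x j = 0 := by
  have e1 : (A₁ *ᵥ x) i = lam * x i := by rw [h₁]; rfl
  have e2 : (A₂ *ᵥ x) i = lam * x i := by rw [h₂]; rfl
  simp only [Matrix.mulVec, dotProduct] at e1 e2
  have : ∑ j, (A₂ i j - A₁ i j) * x j = (∑ j, A₂ i j * x j) - ∑ j, A₁ i j * x j := by
    rw [← Finset.sum_sub_distrib]
    exact Finset.sum_congr rfl fun j _ => by ring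
  rw [this, e1, e2, sub_self]

/-- Deleting a single edge from a signed graph. -/
def delSG (Γ : SignedGraph n) (e : Sym2 (Fin n)) : SignedGraph n where
  G := Γ.G.deleteEdges {e}
  sign := Γ.sign
  sign_symm := Γ.sign_symm
  sign_pm := fun i j h => Γ.sign_pm i j (SimpleGraph.deleteEdges_adj.mp h).1

lemma delSG_signEdge (Γ : SignedGraph n) (e : Sym2 (Fin n)) :
    (delSG Γ e).signEdge = Γ.signEdge := rfl

lemma delSG_negC4Free (Γ : SignedGraph n) (hfree : Γ.NegC4Free) (e : Sym2 (Fin n)) :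
    (delSG Γ e).NegC4Free := by
  intro u c hc h4 hsgn
  have hedges : ∀ f ∈ c.edges, f ∈ Γ.G.edgeSet := fun f hf => by
    have := Walk.edges_subset_edgeSet c hf
    rw [show (delSG Γ e).G = Γ.G.deleteEdges {e} from rfl, edgeSet_deleteEdges] at this
    exact this.1
  refine hfree u (c.transfer Γ.G hedges) (hc.transfer hedges) ?_ ?_
  · rw [Walk.length_transfer]; exact h4
  · show (List.map Γ.signEdge (c.transfer Γ.G hedges).edges).prod = -1
    rw [Walk.edges_transfer]
    exact hsgn

lemma del_unbalanced_of_neg_cycle_avoid (Γ : SignedGraph n) (e : Sym2 (Fin n)) {u : Fin n}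
    (c : Γ.G.Walk u u) (hc : c.IsCycle) (hneg : Γ.walkSign c = -1) (hnot : e ∉ c.edges) :
    (delSG Γ e).Unbalanced := by
  have hedges : ∀ f ∈ c.edges, f ∈ (Γ.G.deleteEdges {e}).edgeSet := fun f hf => by
    rw [edgeSet_deleteEdges]
    refine ⟨Walk.edges_subset_edgeSet c hf, fun hfe => hnot ?_⟩
    rw [Set.mem_singleton_iff] at hfe
    rwa [← hfe]
  refine ⟨u, c.transfer _ hedges, hc.transfer hedges, ?_⟩
  show (List.map Γ.signEdge (c.transfer _ hedges).edges).prod = -1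
  rw [Walk.edges_transfer]
  exact hneg

end SGAux


namespace SGAux
open Matrix Finset SimpleGraph

variable {n : ℕ}

lemma walk_len4 {G : SimpleGraph (Fin n)} {u : Fin n} (c : G.Walk u u) (h4 : c.length = 4) :
    ∃ (a b d : Fin n) (h₀ : G.Adj u a) (h₁ : G.Adj a b) (h₂ : G.Adj b d) (h₃ : G.Adj d u),
      c = Walk.cons h₀ (Walk.cons h₁ (Walk.cons h₂ (Walk.cons h₃ Walk.nil))) := by
  cases c with
  | nil => simp at h4
  | cons h₀ p1 =>
    cases p1 with
    | nil => simp at h4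
    | cons h₁ p2 =>
      cases p2 with
      | nil => simp at h4
      | cons h₂ p3 =>
        cases p3 with
        | nil => simp at h4
        | cons h₃ p4 =>
          cases p4 with
          | nil => exact ⟨_, _, _, h₀, h₁, h₂, h₃, rfl⟩
          | cons h₅ p5 => simp [Walk.length_cons] at h4

/-- The graft: an all-positive complete graph on the complement of `{r, s}`, together with a
negative edge `rs` and positive edges `rt`, `st`. -/
def graftSG (r s t : Fin n) : SignedGraph n where
  G :=
    { Adj := fun i j => i ≠ j ∧
        ((i ≠ r ∧ i ≠ s ∧ j ≠ r ∧ j ≠ s) ∨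
         (i = r ∧ (j = s ∨ j = t)) ∨ (i = s ∧ (j = r ∨ j = t)) ∨
         (i = t ∧ (j = r ∨ j = s)))
      symm := by constructor; intro i j h; exact ⟨Ne.symm h.1, by tauto⟩
      loopless := by constructor; intro i h; exact h.1 rfl }
  sign := fun i j => if (i = r ∧ j = s) ∨ (i = s ∧ j = r) then -1 else 1
  sign_symm := by
    intro i j
    by_cases h : (i = r ∧ j = s) ∨ (i = s ∧ j = r)
    · rw [if_pos h, if_pos (by tauto)]
    · rw [if_neg h, if_neg (by tauto)]
  sign_pm := by
    intro i j _
    by_cases h : (i = r ∧ j = s) ∨ (i = s ∧ j = r)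
    · rw [if_pos h]; right; rfl
    · rw [if_neg h]; left; rfl

variable {r s t : Fin n}

lemma graft_nbr {i j : Fin n} (h : (graftSG r s t).G.Adj i j) (hi : i = r ∨ i = s)
    (hjr : j ≠ r) (hjs : j ≠ s) : j = t := by
  obtain ⟨hne, hc⟩ := h
  rcases hi with rfl | rfl <;> tauto

lemma graft_unbalanced (hrs : r ≠ s) (hrt : r ≠ t) (hst : s ≠ t) :
    (graftSG r s t).Unbalanced := by
  have h1 : (graftSG r s t).G.Adj r s := ⟨hrs, Or.inr (Or.inl ⟨rfl, Or.inl rfl⟩)⟩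
  have h2 : (graftSG r s t).G.Adj s t := ⟨hst, Or.inr (Or.inr (Or.inl ⟨rfl, Or.inr rfl⟩))⟩
  have h3 : (graftSG r s t).G.Adj t r := ⟨Ne.symm hrt, Or.inr (Or.inr (Or.inr ⟨rfl, Or.inl rfl⟩))⟩
  refine ⟨r, Walk.cons h1 (Walk.cons h2 (Walk.cons h3 Walk.nil)), ?_, ?_⟩
  · rw [Walk.cons_isCycle_iff]
    constructor
    · apply Walk.IsPath.mk'
      simp only [Walk.support_cons, Walk.support_nil, List.nodup_cons, List.mem_cons,
        List.mem_singleton, List.not_mem_nil, not_false_iff, and_true, List.nodup_nil]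
      tauto
    · intro hmem
      simp only [Walk.edges_cons, Walk.edges_nil, List.mem_cons, List.not_mem_nil, or_false,
        Sym2.eq_iff] at hmem
      tauto
  · rw [walkSign_cons, walkSign_cons, walkSign_cons, walkSign_nil, mul_one]
    have e1 : (graftSG r s t).signEdge s(r, s) = -1 := by
      show (if (r = r ∧ s = s) ∨ (r = s ∧ s = r) then (-1 : ℤ) else 1) = -1
      rw [if_pos (Or.inl ⟨rfl, rfl⟩)]
    have e2 : (graftSG r s t).signEdge s(s, t) = 1 := by
      show (if (s = r ∧ t = s) ∨ (s = s ∧ t = r) then (-1 : ℤ) else 1) = 1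
      rw [if_neg (by tauto)]
    have e3 : (graftSG r s t).signEdge s(t, r) = 1 := by
      show (if (t = r ∧ r = s) ∨ (t = s ∧ r = r) then (-1 : ℤ) else 1) = 1
      rw [if_neg (by tauto)]
    rw [e1, e2, e3]
    norm_num

lemma graft_negC4Free : (graftSG r s t).NegC4Free := by
  intro u c hc h4 hneg
  obtain ⟨a, b, d, h₀, h₁, h₂, h₃, hdec⟩ := walk_len4 c h4
  -- the only negative edge is s(r,s), so it must appear among the cycle's edges
  obtain ⟨e, hemem, hesign⟩ := exists_neg_edge_of_walkSign_neg _ c hneg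
  have hers : e = s(r, s) := by
    induction e with
    | _ i j =>
      have : (graftSG r s t).sign i j = -1 := hesign
      by_cases hcond : (i = r ∧ j = s) ∨ (i = s ∧ j = r)
      · rcases hcond with ⟨rfl, rfl⟩ | ⟨rfl, rfl⟩
        · rfl
        · exact Sym2.eq_swap
      · exfalso
        have : (1 : ℤ) = -1 := by
          rw [show (graftSG r s t).sign i j = 1 from if_neg hcond] at this
          exact this
        norm_num at this
  subst hers
  -- distinctness of the four vertices
  have hnd : c.support.tail.Nodup := hc.support_nodup
  rw [hdec] at hnd
  simp only [Walk.support_cons, Walk.support_nil, List.tail_cons, List.nodup_cons,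
    List.mem_cons, List.mem_singleton, List.not_mem_nil, or_false, not_or] at hnd
  obtain ⟨⟨hab, had, hau⟩, ⟨hbd, hbu⟩, hdu, -⟩ := hnd
  rw [hdec] at hemem
  simp only [Walk.edges_cons, Walk.edges_nil, List.mem_cons, List.not_mem_nil, or_false] at hemem
  rcases hemem with h | h | h | h <;> rw [Sym2.eq_iff] at h
  · -- {u, a} = {r, s}; then b = t and d = t, contradiction
    have hmem1 : a = r ∨ a = s := by tauto
    have hmem2 : u = r ∨ u = s := by tauto
    have hbrs : b ≠ r ∧ b ≠ s := by
      rcases h with ⟨h1, h2⟩ | ⟨h1, h2⟩ <;> subst h1 <;> subst h2 <;>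
        exact ⟨by tauto, by tauto⟩
    have hdrs : d ≠ r ∧ d ≠ s := by
      rcases h with ⟨h1, h2⟩ | ⟨h1, h2⟩ <;> subst h1 <;> subst h2 <;>
        exact ⟨by tauto, by tauto⟩
    have hbt : b = t := graft_nbr h₁ hmem1 hbrs.1 hbrs.2
    have hdt : d = t := graft_nbr ((graftSG r s t).G.adj_symm h₃) hmem2 hdrs.1 hdrs.2
    exact hbd (hbt.trans hdt.symm)
  · -- {a, b} = {r, s}; then u = t and d = t, contradiction
    have hmem1 : a = r ∨ a = s := by tauto
    have hmem2 : b = r ∨ b = s := by tauto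
    have hurs : u ≠ r ∧ u ≠ s := by
      rcases h with ⟨h1, h2⟩ | ⟨h1, h2⟩ <;> subst h1 <;> subst h2 <;>
        exact ⟨by tauto, by tauto⟩
    have hdrs : d ≠ r ∧ d ≠ s := by
      rcases h with ⟨h1, h2⟩ | ⟨h1, h2⟩ <;> subst h1 <;> subst h2 <;>
        exact ⟨by tauto, by tauto⟩
    have hut : u = t := graft_nbr ((graftSG r s t).G.adj_symm h₀) hmem1 hurs.1 hurs.2
    have hdt : d = t := graft_nbr h₂ hmem2 hdrs.1 hdrs.2
    exact hdu (hdt.trans hut.symm)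
  · -- {b, d} = {r, s}; then a = t and u = t, contradiction
    have hmem1 : b = r ∨ b = s := by tauto
    have hmem2 : d = r ∨ d = s := by tauto
    have hars : a ≠ r ∧ a ≠ s := by
      rcases h with ⟨h1, h2⟩ | ⟨h1, h2⟩ <;> subst h1 <;> subst h2 <;>
        exact ⟨by tauto, by tauto⟩
    have hurs : u ≠ r ∧ u ≠ s := by
      rcases h with ⟨h1, h2⟩ | ⟨h1, h2⟩ <;> subst h1 <;> subst h2 <;>
        exact ⟨by tauto, by tauto⟩
    have hat : a = t := graft_nbr ((graftSG r s t).G.adj_symm h₁) hmem1 hars.1 hars.2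
    have hut : u = t := graft_nbr h₃ hmem2 hurs.1 hurs.2
    exact hau (hat.trans hut.symm)
  · -- {d, u} = {r, s}; then a = t and b = t, contradiction
    have hmem1 : u = r ∨ u = s := by tauto
    have hmem2 : d = r ∨ d = s := by tauto
    have hars : a ≠ r ∧ a ≠ s := by
      rcases h with ⟨h1, h2⟩ | ⟨h1, h2⟩ <;> subst h1 <;> subst h2 <;>
        exact ⟨by tauto, by tauto⟩
    have hbrs : b ≠ r ∧ b ≠ s := by
      rcases h with ⟨h1, h2⟩ | ⟨h1, h2⟩ <;> subst h1 <;> subst h2 <;>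
        exact ⟨by tauto, by tauto⟩
    have hat : a = t := graft_nbr h₀ hmem1 hars.1 hars.2
    have hbt : b = t := graft_nbr ((graftSG r s t).G.adj_symm h₂) hmem2 hbrs.1 hbrs.2
    exact hab (hat.trans hbt.symm)

end SGAux


namespace SGAux
open Matrix Finset SimpleGraph

variable {n : ℕ}

lemma adjMatrix_of_adj (Γ : SignedGraph n) {i j : Fin n} (h : Γ.G.Adj i j) :
    Γ.adjMatrix i j = (Γ.sign i j : ℝ) := by
  unfold SignedGraph.adjMatrix
  exact if_pos h

lemma adjMatrix_of_not_adj (Γ : SignedGraph n) {i j : Fin n} (h : ¬ Γ.G.Adj i j) :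
    Γ.adjMatrix i j = 0 := by
  unfold SignedGraph.adjMatrix
  exact if_neg h

lemma adjMatrix_le_one (Γ : SignedGraph n) (i j : Fin n) : Γ.adjMatrix i j ≤ 1 := by
  by_cases h : Γ.G.Adj i j
  · rw [adjMatrix_of_adj Γ h]
    rcases Γ.sign_pm i j h with h1 | h1 <;> rw [h1] <;> norm_num
  · rw [adjMatrix_of_not_adj Γ h]; norm_num

variable {r s t : Fin n}

lemma graft_sign_pos {i j : Fin n} (h : ¬((i = r ∧ j = s) ∨ (i = s ∧ j = r))) :
    (graftSG r s t).sign i j = 1 := if_neg h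

lemma graft_quad_ge (Γ' : SignedGraph n) (x : Fin n → ℝ) (hnn : ∀ i, 0 ≤ x i)
    (hr0 : x r = 0) (hs0 : x s = 0) (i j : Fin n) :
    Γ'.adjMatrix i j * (x i * x j) ≤ (graftSG r s t).adjMatrix i j * (x i * x j) := by
  rcases eq_or_ne (x i) 0 with h0 | h0
  · simp [h0]
  rcases eq_or_ne (x j) 0 with h1 | h1
  · simp [h1]
  have hir : i ≠ r := fun h => h0 (by rw [h, hr0])
  have his : i ≠ s := fun h => h0 (by rw [h, hs0])
  have hjr : j ≠ r := fun h => h1 (by rw [h, hr0])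
  have hjs : j ≠ s := fun h => h1 (by rw [h, hs0])
  rcases eq_or_ne i j with rfl | hij
  · rw [adjMatrix_of_not_adj Γ' (Γ'.G.loopless.irrefl i),
      adjMatrix_of_not_adj _ ((graftSG r s t).G.loopless.irrefl i)]
  · have hadj : (graftSG r s t).G.Adj i j := ⟨hij, Or.inl ⟨hir, his, hjr, hjs⟩⟩
    have h2 : (graftSG r s t).adjMatrix i j = 1 := by
      rw [adjMatrix_of_adj _ hadj, graft_sign_pos (by tauto)]
      norm_num
    rw [h2, one_mul]
    have h3 := adjMatrix_le_one Γ' i j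
    have hxx : 0 ≤ x i * x j := mul_nonneg (hnn i) (hnn j)
    nlinarith

lemma graft_row_r (hrt : r ≠ t) (hst : s ≠ t) (x : Fin n → ℝ) (hs0 : x s = 0) (j : Fin n) :
    (graftSG r s t).adjMatrix r j * x j = if j = t then x t else 0 := by
  by_cases hjt : j = t
  · subst hjt
    rw [if_pos rfl]
    have hadj : (graftSG r s j).G.Adj r j := ⟨hrt, Or.inr (Or.inl ⟨rfl, Or.inr rfl⟩)⟩
    rw [adjMatrix_of_adj _ hadj, graft_sign_pos (by
      rintro (⟨-, h2⟩ | ⟨-, h2⟩)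
      · exact hst h2.symm
      · exact hrt h2.symm)]
    norm_num
  · rw [if_neg hjt]
    by_cases hjs : j = s
    · subst hjs; rw [hs0, mul_zero]
    · by_cases hjr : j = r
      · rw [hjr, adjMatrix_of_not_adj _ ((graftSG r s t).G.loopless.irrefl r), zero_mul]
      · have hnadj : ¬ (graftSG r s t).G.Adj r j := fun hadj =>
          hjt (graft_nbr hadj (Or.inl rfl) hjr hjs)
        rw [adjMatrix_of_not_adj _ hnadj, zero_mul]

lemma exists_pos_entry (x : Fin n → ℝ) (hnn : ∀ i, 0 ≤ x i) (hunit : ∑ i, x i ^ 2 = 1) :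
    ∃ t, 0 < x t := by
  by_contra h
  push_neg at h
  have hz : ∀ i, x i = 0 := fun i => le_antisymm (h i) (hnn i)
  rw [Finset.sum_congr rfl (fun i _ => by rw [hz i])] at hunit
  simp at hunit

/-- Two distinct vertices where the eigenvector vanishes lead to a contradiction. -/
lemma no_zero_pair (Γ' : SignedGraph n)
    (hmax : ∀ Γ : SignedGraph n, Γ.Unbalanced → Γ.NegC4Free → Γ.lambda1 ≤ Γ'.lambda1)
    (x : Fin n → ℝ) (hx : Γ'.adjMatrix.mulVec x = Γ'.lambda1 • x)
    (hnn : ∀ i, 0 ≤ x i) (hunit : ∑ i, x i ^ 2 = 1)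
    {r s : Fin n} (hrs : r ≠ s) (hr0 : x r = 0) (hs0 : x s = 0) : False := by
  haveI : Nonempty (Fin n) := ⟨r⟩
  obtain ⟨t, hxt⟩ := exists_pos_entry x hnn hunit
  have hrt : r ≠ t := fun h => by rw [← h, hr0] at hxt; exact lt_irrefl _ hxt
  have hst : s ≠ t := fun h => by rw [← h, hs0] at hxt; exact lt_irrefl _ hxt
  have hub := graft_unbalanced hrs hrt hst
  have hfree := graft_negC4Free (r := r) (s := s) (t := t)
  have hR : Γ'.lambda1 ≤ x ⬝ᵥ ((graftSG r s t).adjMatrix *ᵥ x) := by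
    rw [← quad_lambda1 Γ' x hx hunit]
    exact quad_mono (graft_quad_ge Γ' x hnn hr0 hs0)
  have heig := competitor_eigen Γ' _ hmax x hunit hub hfree hR
  have hrow := congrFun heig r
  have hlhs : ((graftSG r s t).adjMatrix *ᵥ x) r = x t := by
    show ∑ j, (graftSG r s t).adjMatrix r j * x j = x t
    rw [Finset.sum_congr rfl fun j _ => graft_row_r hrt hst x hs0 j]
    simp
  have hrhs : (Γ'.lambda1 • x) r = 0 := by
    show Γ'.lambda1 * x r = 0
    rw [hr0, mul_zero]
  rw [hlhs, hrhs] at hrow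
  rw [hrow] at hxt
  exact lt_irrefl _ hxt

end SGAux


namespace SGAux
open Matrix Finset SimpleGraph

variable {n : ℕ}

lemma walkSign_concat (Γ : SignedGraph n) {u v w : Fin n} (q : Γ.G.Walk u v)
    (h : Γ.G.Adj v w) : Γ.walkSign (q.concat h) = Γ.walkSign q * Γ.signEdge s(v, w) := by
  unfold SignedGraph.walkSign
  rw [Walk.edges_concat, List.concat_eq_append, List.map_append, List.prod_append]
  simp

lemma cycle_split_start (Γ : SignedGraph n) {a b : Fin n} (c : Γ.G.Walk a a) (hc : c.IsCycle)
    (he : s(a, b) ∈ c.edges) :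
    ∃ P : Γ.G.Walk b a, s(a, b) ∉ P.edges ∧ Γ.walkSign c = Γ.signEdge s(a, b) * Γ.walkSign P := by
  cases c with
  | nil => simp at he
  | @cons _ z _ h p =>
    have hiff := (Walk.cons_isCycle_iff p h).mp hc
    rw [Walk.edges_cons, List.mem_cons] at he
    rcases he with heq | hmem
    · rw [Sym2.eq_iff] at heq
      rcases heq with ⟨-, rfl⟩ | ⟨rfl, rfl⟩
      · refine ⟨p, ?_, by rw [walkSign_cons]⟩
        exact hiff.2
      · exact absurd h (Γ.G.loopless.irrefl _)
    · by_cases heqz : s(a, b) = s(a, z)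
      · rw [heqz] at hmem
        exact absurd hmem hiff.2
      · have hswap : s(b, a) ∈ p.edges := by rwa [Sym2.eq_swap] at hmem
        obtain ⟨q', h', hq', hne⟩ := path_end_edge p hiff.1.support_nodup b hswap
        refine ⟨(Walk.cons h q').reverse, ?_, ?_⟩
        · rw [Walk.edges_reverse, List.mem_reverse, Walk.edges_cons, List.mem_cons]
          rintro (h1 | h1)
          · exact heqz h1
          · rw [Sym2.eq_swap] at h1
            exact hne h1
        · rw [walkSign_reverse, walkSign_cons, walkSign_cons, hq', walkSign_concat]
          rw [show Γ.signEdge s(b, a) = Γ.signEdge s(a, b) from by rw [Sym2.eq_swap]]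
          ring

lemma cycle_split (Γ : SignedGraph n) {u a b : Fin n} (c : Γ.G.Walk u u) (hc : c.IsCycle)
    (he : s(a, b) ∈ c.edges) :
    ∃ P : Γ.G.Walk b a, s(a, b) ∉ P.edges ∧ Γ.walkSign c = Γ.signEdge s(a, b) * Γ.walkSign P := by
  have ha : a ∈ c.support := Walk.fst_mem_support_of_mem_edges c he
  obtain ⟨P, h1, h2⟩ := cycle_split_start Γ (c.rotate a ha) (hc.rotate ha)
    ((Walk.rotate_edges c a ha).mem_iff.mpr he)
  refine ⟨P, h1, ?_⟩
  have hsigneq : Γ.walkSign (c.rotate a ha) = Γ.walkSign c := by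
    unfold SignedGraph.walkSign
    exact (((Walk.rotate_edges c a ha)).perm.map Γ.signEdge).prod_eq
  rw [← hsigneq]
  exact h2

lemma del_row (Γ' : SignedGraph n) {a b : Fin n} (hab : Γ'.G.Adj a b)
    (hs : Γ'.sign a b = -1) (j : Fin n) :
    (delSG Γ' s(a, b)).adjMatrix a j - Γ'.adjMatrix a j = if j = b then 1 else 0 := by
  by_cases hjb : j = b
  · subst hjb
    rw [if_pos rfl]
    have hnadj : ¬ (delSG Γ' s(a, j)).G.Adj a j := fun h =>
      (SimpleGraph.deleteEdges_adj.mp h).2 rfl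
    rw [adjMatrix_of_not_adj _ hnadj, adjMatrix_of_adj Γ' hab, hs]
    norm_num
  · rw [if_neg hjb]
    by_cases hadj : Γ'.G.Adj a j
    · have hadj2 : (delSG Γ' s(a, b)).G.Adj a j := by
        rw [show (delSG Γ' s(a,b)).G = Γ'.G.deleteEdges {s(a,b)} from rfl,
          SimpleGraph.deleteEdges_adj]
        refine ⟨hadj, ?_⟩
        rw [Set.mem_singleton_iff, Sym2.eq_iff]
        rintro (⟨-, h2⟩ | ⟨h1, -⟩)
        · exact hjb h2
        · exact hab.ne h1
      rw [adjMatrix_of_adj _ hadj2, adjMatrix_of_adj Γ' hadj]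
      exact sub_self _
    · have hnadj2 : ¬ (delSG Γ' s(a, b)).G.Adj a j := fun h =>
        hadj (SimpleGraph.deleteEdges_adj.mp h).1
      rw [adjMatrix_of_not_adj _ hnadj2, adjMatrix_of_not_adj Γ' hadj, sub_zero]

/-- Deleting a negative edge of the extremal graph leaves a balanced graph. -/
lemma neg_edge_del_balanced (Γ' : SignedGraph n) (hfree : Γ'.NegC4Free)
    (hmax : ∀ Γ : SignedGraph n, Γ.Unbalanced → Γ.NegC4Free → Γ.lambda1 ≤ Γ'.lambda1)
    (x : Fin n → ℝ) (hx : Γ'.adjMatrix.mulVec x = Γ'.lambda1 • x)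
    (hnn : ∀ i, 0 ≤ x i) (hunit : ∑ i, x i ^ 2 = 1)
    {a b : Fin n} (hab : Γ'.G.Adj a b) (hsab : Γ'.sign a b = -1) :
    ¬ (delSG Γ' s(a, b)).Unbalanced := by
  intro hub2
  haveI : Nonempty (Fin n) := ⟨a⟩
  have hfree2 := delSG_negC4Free Γ' hfree s(a, b)
  have hcmp : ∀ i j, Γ'.adjMatrix i j * (x i * x j)
      ≤ (delSG Γ' s(a, b)).adjMatrix i j * (x i * x j) := by
    intro i j
    by_cases hadj2 : (delSG Γ' s(a, b)).G.Adj i j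
    · have heq : (delSG Γ' s(a, b)).adjMatrix i j = Γ'.adjMatrix i j := by
        rw [adjMatrix_of_adj _ hadj2,
          adjMatrix_of_adj Γ' (SimpleGraph.deleteEdges_adj.mp hadj2).1]
        rfl
      rw [heq]
    · rw [adjMatrix_of_not_adj _ hadj2]
      by_cases hadj1 : Γ'.G.Adj i j
      · have hmem : s(i, j) ∈ ({s(a, b)} : Set (Sym2 (Fin n))) := by
          by_contra hmm
          exact hadj2 (SimpleGraph.deleteEdges_adj.mpr ⟨hadj1, hmm⟩)
        rw [Set.mem_singleton_iff, Sym2.eq_iff] at hmem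
        have hsij : Γ'.sign i j = -1 := by
          rcases hmem with ⟨rfl, rfl⟩ | ⟨rfl, rfl⟩
          · exact hsab
          · rw [Γ'.sign_symm]; exact hsab
        rw [adjMatrix_of_adj Γ' hadj1, hsij]
        have hxx : 0 ≤ x i * x j := mul_nonneg (hnn i) (hnn j)
        push_cast
        nlinarith
      · rw [adjMatrix_of_not_adj Γ' hadj1]
  have hR : Γ'.lambda1 ≤ x ⬝ᵥ ((delSG Γ' s(a, b)).adjMatrix *ᵥ x) := by
    rw [← quad_lambda1 Γ' x hx hunit]
    exact quad_mono hcmp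
  have heig := competitor_eigen Γ' _ hmax x hunit hub2 hfree2 hR
  -- extract x b = 0 from row a
  have hxb : x b = 0 := by
    have hzero := row_diff_zero hx heig a
    rw [Finset.sum_congr rfl (fun j _ => by rw [del_row Γ' hab hsab j])] at hzero
    simp only [ite_mul, one_mul, zero_mul] at hzero
    rwa [Finset.sum_ite_eq' Finset.univ b x, if_pos (Finset.mem_univ b)] at hzero
  -- extract x a = 0 from row b
  have hxa : x a = 0 := by
    have hswap : s(a, b) = s(b, a) := Sym2.eq_swap
    have hzero := row_diff_zero hx heig b
    have hrow : ∀ j, (delSG Γ' s(a, b)).adjMatrix b j - Γ'.adjMatrix b j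
        = if j = a then 1 else 0 := by
      intro j
      have := del_row Γ' (Γ'.G.adj_symm hab) (by rw [Γ'.sign_symm]; exact hsab) j
      rwa [← hswap] at this
    rw [Finset.sum_congr rfl (fun j _ => by rw [hrow j])] at hzero
    simp only [ite_mul, one_mul, zero_mul] at hzero
    rwa [Finset.sum_ite_eq' Finset.univ a x, if_pos (Finset.mem_univ a)] at hzero
  exact no_zero_pair Γ' hmax x hx hnn hunit hab.ne hxa hxb

/-- Every cycle through a negative edge of the extremal graph is negative. -/
lemma cycle_through_neg (Γ' : SignedGraph n) {a b : Fin n} (hab : Γ'.G.Adj a b)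
    (hsab : Γ'.sign a b = -1) (hbal : ¬ (delSG Γ' s(a, b)).Unbalanced)
    {u u' : Fin n} (c₀ : Γ'.G.Walk u u) (hc₀ : c₀.IsCycle) (hneg₀ : Γ'.walkSign c₀ = -1)
    (hin0 : s(a, b) ∈ c₀.edges)
    (c : Γ'.G.Walk u' u') (hc : c.IsCycle) (hin : s(a, b) ∈ c.edges) :
    Γ'.walkSign c = -1 := by
  rcases walkSign_pm Γ' c with h1 | h1
  swap
  · exact h1
  exfalso
  obtain ⟨P, hPne, hPsign⟩ := cycle_split Γ' c hc hin
  obtain ⟨P₀, hP₀ne, hP₀sign⟩ := cycle_split Γ' c₀ hc₀ hin0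
  have hse : Γ'.signEdge s(a, b) = -1 := hsab
  rw [h1, hse] at hPsign
  rw [hneg₀, hse] at hP₀sign
  have hsP : Γ'.walkSign P = -1 := by linarith
  have hsP₀ : Γ'.walkSign P₀ = 1 := by linarith
  have hPedges : ∀ f ∈ P.edges, f ∈ (Γ'.G.deleteEdges {s(a, b)}).edgeSet := fun f hf => by
    rw [edgeSet_deleteEdges]
    refine ⟨Walk.edges_subset_edgeSet P hf, fun hfe => hPne ?_⟩
    rw [Set.mem_singleton_iff] at hfe
    rwa [← hfe]
  have hP₀edges : ∀ f ∈ P₀.edges, f ∈ (Γ'.G.deleteEdges {s(a, b)}).edgeSet := fun f hf => by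
    rw [edgeSet_deleteEdges]
    refine ⟨Walk.edges_subset_edgeSet P₀ hf, fun hfe => hP₀ne ?_⟩
    rw [Set.mem_singleton_iff] at hfe
    rwa [← hfe]
  have heq := walkSign_eq_of_balanced (delSG Γ' s(a, b)) hbal
    (P.transfer _ hPedges) (P₀.transfer _ hP₀edges)
  have ht1 : (delSG Γ' s(a, b)).walkSign (P.transfer _ hPedges) = Γ'.walkSign P := by
    show (List.map Γ'.signEdge (P.transfer _ hPedges).edges).prod = _
    rw [Walk.edges_transfer]
    rfl
  have ht2 : (delSG Γ' s(a, b)).walkSign (P₀.transfer _ hP₀edges) = Γ'.walkSign P₀ := by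
    show (List.map Γ'.signEdge (P₀.transfer _ hP₀edges).edges).prod = _
    rw [Walk.edges_transfer]
    rfl
  rw [ht1, ht2, hsP, hsP₀] at heq
  norm_num at heq

end SGAux


namespace SGAux
open Matrix Finset SimpleGraph

variable {n : ℕ}

/-- Flipping the signs of two edges to positive. -/
def flipSG (Γ : SignedGraph n) (e₁ e₂ : Sym2 (Fin n)) : SignedGraph n where
  G := Γ.G
  sign := fun i j => if s(i, j) = e₁ ∨ s(i, j) = e₂ then 1 else Γ.sign i j
  sign_symm := by
    intro i j
    have hsw : s(j, i) = s(i, j) := Sym2.eq_swap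
    by_cases h : s(i, j) = e₁ ∨ s(i, j) = e₂
    · rw [if_pos h, if_pos (by rwa [hsw])]
    · rw [if_neg h, if_neg (by rwa [hsw]), Γ.sign_symm]
  sign_pm := by
    intro i j hadj
    by_cases h : s(i, j) = e₁ ∨ s(i, j) = e₂
    · rw [if_pos h]; left; rfl
    · rw [if_neg h]; exact Γ.sign_pm i j hadj

lemma flip_signEdge (Γ : SignedGraph n) (e₁ e₂ e : Sym2 (Fin n)) :
    (flipSG Γ e₁ e₂).signEdge e = if e = e₁ ∨ e = e₂ then 1 else Γ.signEdge e := by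
  induction e with
  | _ i j => rfl

lemma flip_walkSign_eq (Γ : SignedGraph n) (e₁ e₂ : Sym2 (Fin n)) (h12 : e₁ ≠ e₂)
    {u : Fin n} (c : Γ.G.Walk u u) (hnd : c.edges.Nodup)
    (h1 : e₁ ∈ c.edges) (h2 : e₂ ∈ c.edges)
    (hs1 : Γ.signEdge e₁ = -1) (hs2 : Γ.signEdge e₂ = -1) :
    ((c.edges.map (flipSG Γ e₁ e₂).signEdge).prod : ℤ) = (c.edges.map Γ.signEdge).prod := by
  set l := c.edges with hl
  have hperm1 : List.Perm l (e₁ :: l.erase e₁) := List.perm_cons_erase h1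
  have h2' : e₂ ∈ l.erase e₁ := (hnd.mem_erase_iff).mpr ⟨Ne.symm h12, h2⟩
  have hperm2 : List.Perm (l.erase e₁) (e₂ :: (l.erase e₁).erase e₂) :=
    List.perm_cons_erase h2'
  have hperm : List.Perm l (e₁ :: e₂ :: (l.erase e₁).erase e₂) :=
    hperm1.trans (hperm2.cons e₁)
  set l₂ := (l.erase e₁).erase e₂ with hl₂
  have key : ∀ f : Sym2 (Fin n) → ℤ, (l.map f).prod = f e₁ * (f e₂ * (l₂.map f).prod) := by
    intro f
    rw [(hperm.map f).prod_eq]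
    simp
  rw [key, key]
  have hl₂eq : (l₂.map (flipSG Γ e₁ e₂).signEdge).prod = (l₂.map Γ.signEdge).prod := by
    congr 1
    apply List.map_congr_left
    intro e hel
    have hee2 : e ≠ e₂ ∧ e ∈ l.erase e₁ := ((hnd.erase e₁).mem_erase_iff).mp hel
    have hee1 : e ≠ e₁ ∧ e ∈ l := (hnd.mem_erase_iff).mp hee2.2
    rw [flip_signEdge, if_neg (by tauto)]
  have hf1 : (flipSG Γ e₁ e₂).signEdge e₁ = 1 := by
    rw [flip_signEdge, if_pos (Or.inl rfl)]
  have hf2 : (flipSG Γ e₁ e₂).signEdge e₂ = 1 := by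
    rw [flip_signEdge, if_pos (Or.inr rfl)]
  rw [hf1, hf2, hl₂eq, hs1, hs2]
  ring

lemma flip_diff_nonneg (Γ : SignedGraph n) (e₁ e₂ : Sym2 (Fin n)) (i j : Fin n) :
    0 ≤ (flipSG Γ e₁ e₂).adjMatrix i j - Γ.adjMatrix i j := by
  by_cases hadj : Γ.G.Adj i j
  · have hadj2 : (flipSG Γ e₁ e₂).G.Adj i j := hadj
    rw [adjMatrix_of_adj _ hadj2, adjMatrix_of_adj _ hadj]
    by_cases hcond : s(i, j) = e₁ ∨ s(i, j) = e₂
    · rw [show (flipSG Γ e₁ e₂).sign i j = 1 from if_pos hcond]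
      rcases Γ.sign_pm i j hadj with h | h <;> rw [h] <;> norm_num
    · rw [show (flipSG Γ e₁ e₂).sign i j = Γ.sign i j from if_neg hcond, sub_self]
  · have hadj2 : ¬ (flipSG Γ e₁ e₂).G.Adj i j := hadj
    rw [adjMatrix_of_not_adj _ hadj2, adjMatrix_of_not_adj _ hadj, sub_self]

lemma flip_diff_two (Γ : SignedGraph n) (e₂ : Sym2 (Fin n)) {a b : Fin n}
    (hab : Γ.G.Adj a b) (hsab : Γ.sign a b = -1) :
    (flipSG Γ s(a, b) e₂).adjMatrix a b - Γ.adjMatrix a b = 2 := by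
  have hadj2 : (flipSG Γ s(a, b) e₂).G.Adj a b := hab
  rw [adjMatrix_of_adj _ hadj2, adjMatrix_of_adj _ hab,
    show (flipSG Γ s(a, b) e₂).sign a b = 1 from if_pos (Or.inl rfl), hsab]
  norm_num

/-- The central uniqueness argument: the extremal graph cannot have two distinct
negative edges. -/
lemma not_two_neg_edges (Γ' : SignedGraph n) (hub : Γ'.Unbalanced) (hfree : Γ'.NegC4Free)
    (hmax : ∀ Γ : SignedGraph n, Γ.Unbalanced → Γ.NegC4Free → Γ.lambda1 ≤ Γ'.lambda1)
    (x : Fin n → ℝ) (hx : Γ'.adjMatrix.mulVec x = Γ'.lambda1 • x)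
    (hnn : ∀ i, 0 ≤ x i) (hunit : ∑ i, x i ^ 2 = 1)
    {a b c d : Fin n} (hab : Γ'.G.Adj a b) (hsab : Γ'.sign a b = -1)
    (hcd : Γ'.G.Adj c d) (hscd : Γ'.sign c d = -1)
    (hne : s(a, b) ≠ s(c, d)) : False := by
  haveI : Nonempty (Fin n) := ⟨a⟩
  have hbal1 := neg_edge_del_balanced Γ' hfree hmax x hx hnn hunit hab hsab
  have hbal2 := neg_edge_del_balanced Γ' hfree hmax x hx hnn hunit hcd hscd
  obtain ⟨u, c₀, hc₀, hneg₀⟩ := hub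
  have hin1 : s(a, b) ∈ c₀.edges := by
    by_contra hnot
    exact hbal1 (del_unbalanced_of_neg_cycle_avoid Γ' _ c₀ hc₀ hneg₀ hnot)
  have hin2 : s(c, d) ∈ c₀.edges := by
    by_contra hnot
    exact hbal2 (del_unbalanced_of_neg_cycle_avoid Γ' _ c₀ hc₀ hneg₀ hnot)
  have hC4 : ∀ (u' : Fin n) (cc : Γ'.G.Walk u' u'), cc.IsCycle → cc.length = 4 →
      s(a, b) ∉ cc.edges ∧ s(c, d) ∉ cc.edges := by
    intro u' cc hcc h4
    constructor
    · intro hmem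
      exact hfree u' cc hcc h4
        (cycle_through_neg Γ' hab hsab hbal1 c₀ hc₀ hneg₀ hin1 cc hcc hmem)
    · intro hmem
      exact hfree u' cc hcc h4
        (cycle_through_neg Γ' hcd hscd hbal2 c₀ hc₀ hneg₀ hin2 cc hcc hmem)
  have hubf : (flipSG Γ' s(a, b) s(c, d)).Unbalanced := by
    refine ⟨u, c₀, hc₀, ?_⟩
    show ((c₀.edges.map (flipSG Γ' s(a, b) s(c, d)).signEdge).prod : ℤ) = -1
    rw [flip_walkSign_eq Γ' _ _ hne c₀ hc₀.isCircuit.isTrail.edges_nodup hin1 hin2 hsab hscd]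
    exact hneg₀
  have hfreef : (flipSG Γ' s(a, b) s(c, d)).NegC4Free := by
    intro u' cc hcc h4 hneg
    obtain ⟨hn1, hn2⟩ := hC4 u' cc hcc h4
    have heq : (flipSG Γ' s(a, b) s(c, d)).walkSign cc = Γ'.walkSign cc := by
      unfold SignedGraph.walkSign
      congr 1
      apply List.map_congr_left
      intro e he
      rw [flip_signEdge, if_neg]
      rintro (rfl | rfl)
      · exact hn1 he
      · exact hn2 he
    exact hfree u' cc hcc h4 (by rw [← heq]; exact hneg)
  have hcmp : ∀ i j, Γ'.adjMatrix i j * (x i * x j)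
      ≤ (flipSG Γ' s(a, b) s(c, d)).adjMatrix i j * (x i * x j) := by
    intro i j
    have h1 := flip_diff_nonneg Γ' s(a, b) s(c, d) i j
    have h2 : 0 ≤ x i * x j := mul_nonneg (hnn i) (hnn j)
    nlinarith
  have hR : Γ'.lambda1 ≤ x ⬝ᵥ ((flipSG Γ' s(a, b) s(c, d)).adjMatrix *ᵥ x) := by
    rw [← quad_lambda1 Γ' x hx hunit]
    exact quad_mono hcmp
  have heig := competitor_eigen Γ' _ hmax x hunit hubf hfreef hR
  have hxb : x b = 0 := by
    have hzero := row_diff_zero hx heig a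
    have hterm : ∀ j ∈ Finset.univ, (0:ℝ) ≤
        ((flipSG Γ' s(a, b) s(c, d)).adjMatrix a j - Γ'.adjMatrix a j) * x j :=
      fun j _ => mul_nonneg (flip_diff_nonneg Γ' _ _ a j) (hnn j)
    have hb0 := (Finset.sum_eq_zero_iff_of_nonneg hterm).mp hzero b (Finset.mem_univ b)
    rw [flip_diff_two Γ' _ hab hsab] at hb0
    linarith
  have hxa : x a = 0 := by
    have hzero := row_diff_zero hx heig b
    have hterm : ∀ j ∈ Finset.univ, (0:ℝ) ≤
        ((flipSG Γ' s(a, b) s(c, d)).adjMatrix b j - Γ'.adjMatrix b j) * x j :=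
      fun j _ => mul_nonneg (flip_diff_nonneg Γ' _ _ b j) (hnn j)
    have ha0 := (Finset.sum_eq_zero_iff_of_nonneg hterm).mp hzero a (Finset.mem_univ a)
    have hdiff2 : (flipSG Γ' s(a, b) s(c, d)).adjMatrix b a - Γ'.adjMatrix b a = 2 := by
      have hsw : s(b, a) = s(a, b) := Sym2.eq_swap
      have := flip_diff_two (a := b) (b := a) Γ' s(c, d) (Γ'.G.adj_symm hab)
        (by rw [Γ'.sign_symm]; exact hsab)
      rwa [hsw] at this
    rw [hdiff2] at ha0
    linarith
  exact no_zero_pair Γ' hmax x hx hnn hunit hab.ne hxa hxb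

end SGAux


theorem extremal_unique_negative_edge (n : ℕ) (hn : 6 ≤ n) (Γ' : SignedGraph n)
    (hub : Γ'.Unbalanced) (hfree : Γ'.NegC4Free)
    (hmax : ∀ Γ : SignedGraph n, Γ.Unbalanced → Γ.NegC4Free → Γ.lambda1 ≤ Γ'.lambda1)
    (x : Fin n → ℝ) (hx : Γ'.adjMatrix.mulVec x = Γ'.lambda1 • x)
    (hnn : ∀ i, 0 ≤ x i) (hunit : ∑ i, x i ^ 2 = 1) :
    ∃! e : Sym2 (Fin n), e ∈ Γ'.G.edgeSet ∧ Γ'.signEdge e = -1 := by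
  classical
  have key : ∀ (e₁ e₂ : Sym2 (Fin n)), e₁ ∈ Γ'.G.edgeSet → Γ'.signEdge e₁ = -1 →
      e₂ ∈ Γ'.G.edgeSet → Γ'.signEdge e₂ = -1 → e₁ = e₂ := by
    intro e₁ e₂
    induction e₁ using Sym2.ind with
    | _ a b =>
      induction e₂ using Sym2.ind with
      | _ c d =>
        intro h1m h1s h2m h2s
        by_contra hne
        exact SGAux.not_two_neg_edges Γ' hub hfree hmax x hx hnn hunit
          (Γ'.G.mem_edgeSet.mp h1m) h1s (Γ'.G.mem_edgeSet.mp h2m) h2s hne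
  obtain ⟨u, c₀, hc₀, hneg₀⟩ := hub
  obtain ⟨e₀, he₀mem, he₀sign⟩ := SGAux.exists_neg_edge_of_walkSign_neg Γ' c₀ hneg₀
  have he₀set : e₀ ∈ Γ'.G.edgeSet := SimpleGraph.Walk.edges_subset_edgeSet c₀ he₀mem
  refine ⟨e₀, ⟨he₀set, he₀sign⟩, ?_⟩
  intro e' he'
  exact key e' e₀ he'.1 he'.2 he₀set he₀sign
end

section
/- Let n ≥ 6 and let Γ' be a signed graph of order n that attains the maximum largest eigenvalue λ1 among all unbalanced, negative-C4-free signed graphs of order n, let x be a nonnegative unit eigenvector of A(Γ') corresponding to λ1(Γ'), and suppose Γ' has exactly one negative edge v1v2. Then the coordinate x_i of x is strictly positive for every vertex v_i ∉ {v1, v2}. -/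
open scoped BigOperators

open SimpleGraph

lemma c4_structure {V : Type*} {G : SimpleGraph V} {v : V} (c : G.Walk v v)
    (hlen : c.length = 4) {i u a b : V} (hia : i ≠ a) (hib : i ≠ b) (hua : u ≠ a) (hub : u ≠ b)
    (hiu : s(i,u) ∈ c.edges) (hab : s(a,b) ∈ c.edges) :
    (G.Adj u a ∧ G.Adj i b) ∨ (G.Adj u b ∧ G.Adj i a) := by
  cases c with
  | nil => simp at hlen
  | cons h1 p =>
  cases p with
  | nil => simp at hlen
  | cons h2 p =>
  cases p with
  | nil => simp at hlen
  | cons h3 p =>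
  cases p with
  | nil => simp at hlen
  | cons h4 p =>
  cases p with
  | cons h5 p => simp at hlen
  | nil =>
  simp only [Walk.edges_cons, Walk.edges_nil, List.mem_cons, List.not_mem_nil, or_false,
    Sym2.eq_iff] at hiu hab
  have h1' := h1.symm
  have h2' := h2.symm
  have h3' := h3.symm
  have h4' := h4.symm
  rcases hiu with (⟨rfl,rfl⟩|⟨rfl,rfl⟩)|(⟨rfl,rfl⟩|⟨rfl,rfl⟩)|(⟨rfl,rfl⟩|⟨rfl,rfl⟩)|(⟨rfl,rfl⟩|⟨rfl,rfl⟩) <;>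
    rcases hab with (⟨rfl,rfl⟩|⟨rfl,rfl⟩)|(⟨rfl,rfl⟩|⟨rfl,rfl⟩)|(⟨rfl,rfl⟩|⟨rfl,rfl⟩)|(⟨rfl,rfl⟩|⟨rfl,rfl⟩) <;>
    first
      | (exact absurd rfl hia)
      | (exact absurd rfl hib)
      | (exact absurd rfl hua)
      | (exact absurd rfl hub)
      | tauto

lemma transfer_isCycle {V : Type*} {G H : SimpleGraph V} {v : V} (c : G.Walk v v)
    (h : ∀ e ∈ c.edges, e ∈ H.edgeSet) (hc : c.IsCycle) : (c.transfer H h).IsCycle := by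
  rw [Walk.isCycle_def, Walk.isTrail_def] at hc ⊢
  refine ⟨by rw [Walk.edges_transfer]; exact hc.1, ?_, by rw [Walk.support_transfer]; exact hc.2.2⟩
  intro hnil
  apply hc.2.1
  have hl : c.length = 0 := by
    have := congrArg Walk.length hnil
    rwa [Walk.length_transfer, Walk.length_nil] at this
  cases c with
  | nil => rfl
  | cons h p => simp at hl

namespace SignedGraph
variable {n : ℕ}

lemma walkSign_transfer (Γ Γ₂ : SignedGraph n) {u v : Fin n} (c : Γ.G.Walk u v)
    (h : ∀ e ∈ c.edges, e ∈ Γ₂.G.edgeSet)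
    (hsign : ∀ e ∈ c.edges, Γ₂.signEdge e = Γ.signEdge e) :
    Γ₂.walkSign (c.transfer Γ₂.G h) = Γ.walkSign c := by
  unfold walkSign
  rw [Walk.edges_transfer]
  exact congrArg List.prod (List.map_congr_left hsign)

lemma signEdge_mk (Γ : SignedGraph n) (p q : Fin n) : Γ.signEdge s(p,q) = Γ.sign p q := rfl

lemma exists_neg_edge (Γ : SignedGraph n) {v : Fin n} (c : Γ.G.Walk v v)
    (h : Γ.walkSign c = -1) : ∃ e ∈ c.edges, Γ.signEdge e = -1 := by
  by_contra h'
  push_neg at h'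
  have hall : ∀ y ∈ c.edges.map Γ.signEdge, y = 1 := by
    intro y hy
    rcases List.mem_map.mp hy with ⟨e, he, rfl⟩
    have hE := c.edges_subset_edgeSet he
    have hne := h' e he
    induction e using Sym2.ind with
    | _ p q =>
      rw [SimpleGraph.mem_edgeSet] at hE
      rw [signEdge_mk] at hne ⊢
      rcases Γ.sign_pm p q hE with h1 | h1
      · exact h1
      · exact absurd h1 hne
  rw [walkSign, List.prod_eq_one hall] at h
  norm_num at h

lemma adjMatrix_isHermitian (Γ : SignedGraph n) : Γ.adjMatrix.IsHermitian := by
  rw [Matrix.IsHermitian, Matrix.conjTranspose_eq_transpose_of_trivial]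
  ext j k
  rw [Matrix.transpose_apply]
  unfold adjMatrix
  by_cases h : Γ.G.Adj j k
  · rw [if_pos h, if_pos h.symm, Γ.sign_symm]
  · rw [if_neg h, if_neg (fun h' => h h'.symm)]

lemma adjMatrix_diag (Γ : SignedGraph n) (i : Fin n) : Γ.adjMatrix i i = 0 := by
  unfold adjMatrix
  rw [if_neg (Γ.G.irrefl)]

end SignedGraph

namespace SignedGraph
variable {n : ℕ}

/-- Modify a signed graph: possibly delete the edge `ia`, and add a positive edge `iu`. -/
def tweak (Γ' : SignedGraph n) (i u a : Fin n) (del : Bool) : SignedGraph n where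
  G :=
    { Adj := fun j k => j ≠ k ∧
        ((Γ'.G.Adj j k ∧ (del = true → ¬((j = i ∧ k = a) ∨ (j = a ∧ k = i))))
          ∨ ((j = i ∧ k = u) ∨ (j = u ∧ k = i)))
      symm := by
        constructor
        intro j k h
        refine ⟨h.1.symm, ?_⟩
        rcases h.2 with ⟨hadj, hd⟩ | h2
        · exact Or.inl ⟨hadj.symm, fun hd' => fun hp => (hd hd') (by tauto)⟩
        · exact Or.inr (by tauto)
      loopless := ⟨fun j h => h.1 rfl⟩ }
  sign := fun j k => if (j = i ∧ k = u) ∨ (j = u ∧ k = i) then 1 else Γ'.sign j k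
  sign_symm := by
    intro j k
    by_cases h : (j = i ∧ k = u) ∨ (j = u ∧ k = i)
    · rw [if_pos h, if_pos (by tauto)]
    · rw [if_neg h, if_neg (by tauto), Γ'.sign_symm]
  sign_pm := by
    intro j k hadj
    by_cases h : (j = i ∧ k = u) ∨ (j = u ∧ k = i)
    · rw [if_pos h]; left; rfl
    · rw [if_neg h]
      rcases hadj.2 with ⟨hadj', _⟩ | h2
      · exact Γ'.sign_pm j k hadj'
      · exact absurd h2 h

lemma tweak_adj_iff (Γ' : SignedGraph n) (i u a : Fin n) (del : Bool) (j k : Fin n) :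
    (Γ'.tweak i u a del).G.Adj j k ↔ j ≠ k ∧
        ((Γ'.G.Adj j k ∧ (del = true → ¬((j = i ∧ k = a) ∨ (j = a ∧ k = i))))
          ∨ ((j = i ∧ k = u) ∨ (j = u ∧ k = i))) := Iff.rfl

lemma tweak_sign_eq (Γ' : SignedGraph n) (i u a : Fin n) (del : Bool) (j k : Fin n)
    (h : ¬((j = i ∧ k = u) ∨ (j = u ∧ k = i))) :
    (Γ'.tweak i u a del).sign j k = Γ'.sign j k := if_neg h

lemma tweak_sign_new (Γ' : SignedGraph n) (i u a : Fin n) (del : Bool) (j k : Fin n)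
    (h : (j = i ∧ k = u) ∨ (j = u ∧ k = i)) :
    (Γ'.tweak i u a del).sign j k = 1 := if_pos h

/-- membership in tweak's edge set for an old edge not equal to the deleted/new pairs -/
lemma tweak_adj_of_old (Γ' : SignedGraph n) (i u a : Fin n) (del : Bool) {j k : Fin n}
    (h : Γ'.G.Adj j k) (hd : del = true → ¬((j = i ∧ k = a) ∨ (j = a ∧ k = i))) :
    (Γ'.tweak i u a del).G.Adj j k :=
  ⟨h.ne, Or.inl ⟨h, hd⟩⟩

lemma tweak_adj_new (Γ' : SignedGraph n) (i u a : Fin n) (del : Bool) (h : i ≠ u) :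
    (Γ'.tweak i u a del).G.Adj i u := ⟨h, Or.inr (Or.inl ⟨rfl, rfl⟩)⟩

/-- an edge of the tweak that is not the new pair is an edge of `Γ'` with the same sign. -/
lemma tweak_adj_old (Γ' : SignedGraph n) (i u a : Fin n) (del : Bool) {j k : Fin n}
    (h : (Γ'.tweak i u a del).G.Adj j k) (hne : ¬((j = i ∧ k = u) ∨ (j = u ∧ k = i))) :
    Γ'.G.Adj j k := by
  rcases h.2 with ⟨hadj, _⟩ | h2
  · exact hadj
  · exact absurd h2 hne

end SignedGraph

section Spectral
open Matrix
variable {m : ℕ}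

lemma ray (B : Matrix (Fin m) (Fin m) ℝ) (hB : B.IsHermitian) (M : ℝ)
    (hM : ∀ i, hB.eigenvalues i ≤ M) (y : Fin m → ℝ) :
    y ⬝ᵥ (B *ᵥ y) ≤ M * (y ⬝ᵥ y) := by
  classical
  have hBeq := hB.spectral_theorem
  set U : Matrix (Fin m) (Fin m) ℝ := (hB.eigenvectorUnitary : Matrix (Fin m) (Fin m) ℝ) with hU
  set D : Matrix (Fin m) (Fin m) ℝ := diagonal (RCLike.ofReal ∘ hB.eigenvalues) with hD
  have hUt : star U = Uᵀ := conjTranspose_eq_transpose_of_trivial U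
  set c : Fin m → ℝ := Uᵀ *ᵥ y with hc
  have hUU : U * Uᵀ = 1 := by
    have := (Matrix.mem_unitaryGroup_iff).mp hB.eigenvectorUnitary.2
    rwa [← hU, hUt] at this
  have h1 : y ⬝ᵥ (B *ᵥ y) = c ⬝ᵥ (D *ᵥ c) := by
    rw [hBeq, Unitary.conjStarAlgAut_apply, hUt, ← mulVec_mulVec, ← mulVec_mulVec, dotProduct_mulVec, ← mulVec_transpose, hc]
  have h2 : y ⬝ᵥ y = c ⬝ᵥ c := by
    rw [hc, dotProduct_mulVec, vecMul_transpose, mulVec_mulVec, hUU, one_mulVec]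
  have h3 : c ⬝ᵥ (D *ᵥ c) = ∑ i, hB.eigenvalues i * (c i)^2 := by
    rw [hD]
    simp only [dotProduct, mulVec_diagonal, Function.comp_apply, RCLike.ofReal_real_eq_id, id_eq]
    apply Finset.sum_congr rfl
    intro i _
    ring
  have h4 : ∑ i, hB.eigenvalues i * (c i)^2 ≤ ∑ i, M * (c i)^2 := by
    apply Finset.sum_le_sum
    intro i _
    exact mul_le_mul_of_nonneg_right (hM i) (sq_nonneg _)
  have h5 : c ⬝ᵥ c = ∑ i, (c i)^2 := by simp [dotProduct, pow_two]
  rw [h1, h2, h3, h5, Finset.mul_sum]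
  exact h4

lemma spec_le (B : Matrix (Fin m) (Fin m) ℝ) (hB : B.IsHermitian) (M : ℝ)
    (hM : ∀ i, hB.eigenvalues i ≤ M) (μ : ℝ) (hμ : μ ∈ spectrum ℝ B) : μ ≤ M := by
  classical
  rw [← Matrix.spectrum_toEuclideanLin] at hμ
  rw [← Module.End.hasEigenvalue_iff_mem_spectrum] at hμ
  obtain ⟨v, hv⟩ := hμ.exists_hasEigenvector
  set w : Fin m → ℝ := (WithLp.equiv 2 (Fin m → ℝ)) v with hw
  have hev : B *ᵥ w = μ • w := by
    have := congrArg (WithLp.equiv 2 (Fin m → ℝ)) hv.apply_eq_smul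
    simpa [hw] using this
  have hw0 : w ≠ 0 := by
    intro h
    apply hv.2
    simpa [hw] using congrArg (WithLp.equiv 2 (Fin m → ℝ)).symm h
  have hpos : 0 < w ⬝ᵥ w := by
    rcases Function.ne_iff.mp hw0 with ⟨j, hj⟩
    have : 0 < ∑ i, w i * w i := by
      apply Finset.sum_pos' (fun i _ => mul_self_nonneg _)
      exact ⟨j, Finset.mem_univ j, mul_self_pos.mpr hj⟩
    simpa [dotProduct] using this
  have := ray B hB M hM w
  rw [hev] at this
  have h2 : w ⬝ᵥ (μ • w) = μ * (w ⬝ᵥ w) := by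
    simp [dotProduct, Finset.mul_sum]; apply Finset.sum_congr rfl; intros; ring
  rw [h2] at this
  exact le_of_mul_le_mul_right (by linarith) hpos

lemma ray_sSup (B : Matrix (Fin m) (Fin m) ℝ) (hm : 0 < m) (hB : B.IsHermitian) (y : Fin m → ℝ) :
    y ⬝ᵥ (B *ᵥ y) ≤ sSup (spectrum ℝ B) * (y ⬝ᵥ y) := by
  classical
  have : Nonempty (Fin m) := ⟨⟨0, hm⟩⟩
  have hne : (Finset.univ : Finset (Fin m)).Nonempty := Finset.univ_nonempty
  set M : ℝ := Finset.univ.sup' hne hB.eigenvalues with hMdef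
  have hM : ∀ i, hB.eigenvalues i ≤ M := fun i => Finset.le_sup' _ (Finset.mem_univ i)
  have hbdd : BddAbove (spectrum ℝ B) := ⟨M, fun μ hμ => spec_le B hB M hM μ hμ⟩
  obtain ⟨i0, -, hi0⟩ := Finset.exists_mem_eq_sup' hne hB.eigenvalues
  have hMmem : M ∈ spectrum ℝ B := by
    rw [hMdef, hi0]; exact hB.eigenvalues_mem_spectrum_real i0
  have hMle : M ≤ sSup (spectrum ℝ B) := le_csSup hbdd hMmem
  have h1 := ray B hB M hM y
  have h2 : 0 ≤ y ⬝ᵥ y := by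
    simp only [dotProduct]
    exact Finset.sum_nonneg fun i _ => mul_self_nonneg _
  nlinarith [mul_le_mul_of_nonneg_right hMle h2]

lemma bump (B : Matrix (Fin m) (Fin m) ℝ) (hm : 0 < m) (hB : B.IsHermitian) (i : Fin m)
    (hBii : B i i = 0) (x : Fin m → ℝ) (lam : ℝ) (hx1 : x ⬝ᵥ x = 1) (hxi : x i = 0)
    (hlam : x ⬝ᵥ (B *ᵥ x) = lam) (hc : 0 < (B *ᵥ x) i) :
    lam < sSup (spectrum ℝ B) := by
  classical
  set cc : ℝ := (B *ᵥ x) i with hcc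
  set t : ℝ := cc / (|lam| + cc) with ht
  have htpos : 0 < t := div_pos hc (by positivity)
  have hBt : Bᵀ = B := by
    have := hB
    rwa [Matrix.IsHermitian, conjTranspose_eq_transpose_of_trivial] at this
  set e : Fin m → ℝ := Pi.single i 1 with he
  set y : Fin m → ℝ := x + t • e with hy
  have hxBe : x ⬝ᵥ (B *ᵥ e) = cc := by
    rw [dotProduct_mulVec, ← mulVec_transpose, hBt, he]
    simp [dotProduct, Pi.single_apply, hcc]
  have heBx : e ⬝ᵥ (B *ᵥ x) = cc := by
    rw [he]
    simp [dotProduct, Pi.single_apply, hcc]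
  have heBe : e ⬝ᵥ (B *ᵥ e) = 0 := by
    rw [he]
    simp [dotProduct, mulVec, Pi.single_apply, hBii]
  have hyBy : y ⬝ᵥ (B *ᵥ y) = lam + 2 * t * cc := by
    rw [hy]
    simp only [mulVec_add, mulVec_smul, add_dotProduct, dotProduct_add, smul_dotProduct,
      dotProduct_smul, hlam, hxBe, heBx, heBe, smul_eq_mul]
    ring
  have hxe : x ⬝ᵥ e = 0 := by rw [he]; simp [hxi]
  have hex : e ⬝ᵥ x = 0 := by rw [he]; simp [hxi]
  have hee : e ⬝ᵥ e = 1 := by rw [he]; simp [dotProduct, Pi.single_apply]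
  have hyy : y ⬝ᵥ y = 1 + t^2 := by
    rw [hy]
    simp only [add_dotProduct, dotProduct_add, smul_dotProduct, dotProduct_smul, hx1, hxe, hex,
      hee, smul_eq_mul]
    ring
  by_contra hcon
  push_neg at hcon
  have h1 := ray_sSup B hm hB y
  rw [hyBy, hyy] at h1
  have h2 : sSup (spectrum ℝ B) * (1 + t^2) ≤ lam * (1 + t^2) := by
    apply mul_le_mul_of_nonneg_right hcon
    positivity
  have h3 : 2 * cc ≤ lam * t := by nlinarith
  have h4 : lam * t ≤ |lam| * t := mul_le_mul_of_nonneg_right (le_abs_self lam) htpos.le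
  have h5 : |lam| * t ≤ cc := by
    have hD : (0:ℝ) < |lam| + cc := by positivity
    rw [ht, mul_div_assoc', div_le_iff₀ hD]
    nlinarith [abs_nonneg lam]
  nlinarith

end Spectral

open SignedGraph Matrix in
lemma add_contra {n : ℕ} (hn : 0 < n) (Γ' : SignedGraph n)
    (hfree : Γ'.NegC4Free)
    (hmax : ∀ Γ : SignedGraph n, Γ.Unbalanced → Γ.NegC4Free → Γ.lambda1 ≤ Γ'.lambda1)
    (x : Fin n → ℝ) (hx : Γ'.adjMatrix.mulVec x = Γ'.lambda1 • x)
    (hunit : ∑ j, x j ^ 2 = 1)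
    (a b : Fin n)
    (huniq : ∀ j k, Γ'.G.Adj j k → Γ'.sign j k = -1 → s(j, k) = s(a, b))
    (i u : Fin n) (hia : i ≠ a) (hib : i ≠ b) (hua : u ≠ a) (hub2 : u ≠ b) (hiu : i ≠ u)
    (hnadj : ¬Γ'.G.Adj i u) (hxi : x i = 0) (hxu : 0 < x u)
    (del : Bool) (hdelxa : del = true → x a = 0)
    (hunb2 : (Γ'.tweak i u a del).Unbalanced)
    (hsafe1 : ¬((Γ'.tweak i u a del).G.Adj u a ∧ (Γ'.tweak i u a del).G.Adj i b))
    (hsafe2 : ¬((Γ'.tweak i u a del).G.Adj u b ∧ (Γ'.tweak i u a del).G.Adj i a)) :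
    False := by
  classical
  set Γ : SignedGraph n := Γ'.tweak i u a del with hΓ
  set lam : ℝ := Γ'.lambda1 with hlamdef
  -- Γ is negative-C4-free
  have hfree2 : Γ.NegC4Free := by
    intro v c hcyc hlen
    intro hsgn
    by_cases hmem : s(i,u) ∈ c.edges
    · obtain ⟨e, he, hesign⟩ := Γ.exists_neg_edge c hsgn
      have heab : e = s(a,b) := by
        have hE := c.edges_subset_edgeSet he
        induction e using Sym2.ind with
        | _ p q =>
          rw [SimpleGraph.mem_edgeSet] at hE
          rw [SignedGraph.signEdge_mk] at hesign
          have hnotnew : ¬((p = i ∧ q = u) ∨ (p = u ∧ q = i)) := by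
            intro hp
            rw [hΓ, SignedGraph.tweak_sign_new _ _ _ _ _ _ _ hp] at hesign
            norm_num at hesign
          rw [hΓ, SignedGraph.tweak_sign_eq _ _ _ _ _ _ _ hnotnew] at hesign
          exact huniq p q (SignedGraph.tweak_adj_old _ _ _ _ _ hE hnotnew) hesign
      rw [heab] at he
      rcases c4_structure c hlen hia hib hua hub2 hmem he with ⟨h1, h2⟩ | ⟨h1, h2⟩
      · exact hsafe1 ⟨h1, h2⟩
      · exact hsafe2 ⟨h1, h2⟩
    · have hnotnew : ∀ e ∈ c.edges, ∀ p q : Fin n, e = s(p,q) →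
          ¬((p = i ∧ q = u) ∨ (p = u ∧ q = i)) := by
        intro e he p q hepq hp
        apply hmem
        have : e = s(i,u) := by
          rw [hepq, Sym2.eq_iff]; tauto
        rwa [this] at he
      have hold : ∀ e ∈ c.edges, e ∈ Γ'.G.edgeSet := by
        intro e he
        have hE := c.edges_subset_edgeSet he
        have hne := hnotnew e he
        induction e using Sym2.ind with
        | _ p q =>
          rw [SimpleGraph.mem_edgeSet] at hE ⊢
          exact SignedGraph.tweak_adj_old _ _ _ _ _ hE (hne p q rfl)
      have hsigneq : ∀ e ∈ c.edges, Γ'.signEdge e = Γ.signEdge e := by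
        intro e he
        have hne := hnotnew e he
        induction e using Sym2.ind with
        | _ p q =>
          rw [SignedGraph.signEdge_mk, SignedGraph.signEdge_mk, hΓ,
            SignedGraph.tweak_sign_eq _ _ _ _ _ _ _ (hne p q rfl)]
      exact hfree v (c.transfer Γ'.G hold) (transfer_isCycle c hold hcyc)
        (by rw [SimpleGraph.Walk.length_transfer]; exact hlen)
        (by rw [SignedGraph.walkSign_transfer Γ Γ' c hold hsigneq]; exact hsgn)
  have hle : Γ.lambda1 ≤ lam := hmax Γ hunb2 hfree2
  -- matrix entries
  have hentry : ∀ j k, Γ.adjMatrix j k * x k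
      = Γ'.adjMatrix j k * x k + (if (j = i ∧ k = u) ∨ (j = u ∧ k = i) then x k else 0) := by
    intro j k
    by_cases hnew : (j = i ∧ k = u) ∨ (j = u ∧ k = i)
    · rw [if_pos hnew]
      rcases hnew with ⟨rfl, rfl⟩ | ⟨rfl, rfl⟩
      · have h1 : Γ.adjMatrix j k = 1 := by
          unfold SignedGraph.adjMatrix
          rw [if_pos (SignedGraph.tweak_adj_new _ _ _ _ _ hiu),
            SignedGraph.tweak_sign_new _ _ _ _ _ _ _ (Or.inl ⟨rfl, rfl⟩)]
          norm_num
        have h2 : Γ'.adjMatrix j k = 0 := by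
          unfold SignedGraph.adjMatrix
          rw [if_neg hnadj]
        rw [h1, h2]; ring
      · have h1 : Γ.adjMatrix j k = 1 := by
          unfold SignedGraph.adjMatrix
          rw [if_pos (SignedGraph.tweak_adj_new _ _ _ _ _ hiu).symm,
            SignedGraph.tweak_sign_new _ _ _ _ _ _ _ (Or.inr ⟨rfl, rfl⟩)]
          norm_num
        have h2 : Γ'.adjMatrix j k = 0 := by
          unfold SignedGraph.adjMatrix
          rw [if_neg (fun h => hnadj h.symm)]
        rw [h1, h2]; ring
    · rw [if_neg hnew, add_zero]
      by_cases hdelp : del = true ∧ ((j = i ∧ k = a) ∨ (j = a ∧ k = i))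
      · rcases hdelp.2 with ⟨rfl, rfl⟩ | ⟨rfl, rfl⟩
        · rw [hdelxa hdelp.1, mul_zero, mul_zero]
        · rw [hxi, mul_zero, mul_zero]
      · have heq : Γ.adjMatrix j k = Γ'.adjMatrix j k := by
          unfold SignedGraph.adjMatrix
          by_cases hadj : Γ'.G.Adj j k
          · rw [if_pos hadj,
              if_pos (SignedGraph.tweak_adj_of_old _ _ _ _ _ hadj (fun hd hp => hdelp ⟨hd, hp⟩)),
              hΓ, SignedGraph.tweak_sign_eq _ _ _ _ _ _ _ hnew]
          · rw [if_neg hadj, if_neg (fun h => hadj (SignedGraph.tweak_adj_old _ _ _ _ _ h hnew))]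
        rw [heq]
  -- rows
  have hxrow : ∀ j, (Γ'.adjMatrix.mulVec x) j = lam * x j := by
    intro j
    rw [hx]
    simp
  have hrow2 : ∀ j, (Γ.adjMatrix.mulVec x) j
      = lam * x j + (if j = i then x u else 0) + (if j = u then x i else 0) := by
    intro j
    have hsum : (Γ.adjMatrix.mulVec x) j = ∑ k, Γ.adjMatrix j k * x k := rfl
    rw [hsum, Finset.sum_congr rfl (fun k _ => hentry j k), Finset.sum_add_distrib]
    have e1 : ∑ k, Γ'.adjMatrix j k * x k = lam * x j := hxrow j
    have e2 : ∑ k, (if (j = i ∧ k = u) ∨ (j = u ∧ k = i) then x k else 0)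
        = (if j = i then x u else 0) + (if j = u then x i else 0) := by
      by_cases hji : j = i
      · have hju : j ≠ u := fun h => hiu (hji.symm.trans h)
        rw [if_pos hji, if_neg hju]
        rw [Finset.sum_congr rfl (fun k _ => by
          have hcnd : ((j = i ∧ k = u) ∨ (j = u ∧ k = i)) ↔ k = u := by
            constructor
            · rintro (⟨-, h⟩ | ⟨h, -⟩)
              · exact h
              · exact absurd h hju
            · intro h; exact Or.inl ⟨hji, h⟩
          rw [if_congr hcnd rfl rfl])]
        simp [Finset.sum_ite_eq']
      · by_cases hju : j = u
        · rw [if_neg hji, if_pos hju]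
          rw [Finset.sum_congr rfl (fun k _ => by
            have hcnd : ((j = i ∧ k = u) ∨ (j = u ∧ k = i)) ↔ k = i := by
              constructor
              · rintro (⟨h, -⟩ | ⟨-, h⟩)
                · exact absurd h hji
                · exact h
              · intro h; exact Or.inr ⟨hju, h⟩
            rw [if_congr hcnd rfl rfl])]
          simp [Finset.sum_ite_eq']
        · rw [if_neg hji, if_neg hju]
          rw [Finset.sum_congr rfl (fun k _ => by
            have hcnd : ¬((j = i ∧ k = u) ∨ (j = u ∧ k = i)) := by tauto
            rw [if_neg hcnd])]
          simp
    rw [e1, e2]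
    ring
  have hci : (Γ.adjMatrix.mulVec x) i = x u := by
    rw [hrow2 i, hxi, if_pos rfl, if_neg hiu]
    ring
  have hquad : x ⬝ᵥ (Γ.adjMatrix *ᵥ x) = lam := by
    have hterm : ∀ j, x j * (Γ.adjMatrix.mulVec x) j
        = lam * x j ^ 2 + (if j = i then x j * x u else 0) + (if j = u then x j * x i else 0) := by
      intro j
      rw [hrow2 j]
      split_ifs <;> ring
    have hdot : x ⬝ᵥ (Γ.adjMatrix *ᵥ x) = ∑ j, x j * (Γ.adjMatrix.mulVec x) j := rfl
    rw [hdot, Finset.sum_congr rfl (fun j _ => hterm j), Finset.sum_add_distrib,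
      Finset.sum_add_distrib]
    have e1 : ∑ j, lam * x j ^ 2 = lam := by rw [← Finset.mul_sum, hunit, mul_one]
    have e2 : ∑ j, (if j = i then x j * x u else 0) = x i * x u := by
      simp [Finset.sum_ite_eq']
    have e3 : ∑ j, (if j = u then x j * x i else 0) = x u * x i := by
      simp [Finset.sum_ite_eq']
    rw [e1, e2, e3, hxi]
    ring
  have hx1 : x ⬝ᵥ x = 1 := by
    have : x ⬝ᵥ x = ∑ j, x j ^ 2 := by
      simp [dotProduct, pow_two]
    rw [this, hunit]
  have hfin := bump Γ.adjMatrix hn Γ.adjMatrix_isHermitian i (Γ.adjMatrix_diag i) x lam hx1 hxi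
    hquad (by rw [hci]; exact hxu)
  have : Γ.lambda1 = sSup (spectrum ℝ Γ.adjMatrix) := rfl
  rw [← this] at hfin
  linarith

namespace SignedGraph
open scoped Classical
variable {n : ℕ}

/-- Row equation of the eigenvector at a vertex away from `a, b`. -/
lemma row_off (Γ' : SignedGraph n) (x : Fin n → ℝ)
    (hx : Γ'.adjMatrix.mulVec x = Γ'.lambda1 • x) (a b : Fin n)
    (huniq : ∀ j k, Γ'.G.Adj j k → Γ'.sign j k = -1 → s(j, k) = s(a, b))
    (j : Fin n) (hja : j ≠ a) (hjb : j ≠ b) :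
    ∑ k, (if Γ'.G.Adj j k then x k else 0) = Γ'.lambda1 * x j := by
  classical
  have hrow : ∑ k, Γ'.adjMatrix j k * x k = Γ'.lambda1 * x j := by
    have := congrFun hx j
    simpa [Matrix.mulVec, dotProduct] using this
  rw [← hrow]
  apply Finset.sum_congr rfl
  intro k _
  by_cases hadj : Γ'.G.Adj j k
  · rw [if_pos hadj]
    have hsign : Γ'.sign j k = 1 := by
      rcases Γ'.sign_pm j k hadj with h | h
      · exact h
      · exfalso
        have := huniq j k hadj h
        rw [Sym2.eq_iff] at this
        tauto
    unfold adjMatrix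
    rw [if_pos hadj, hsign]
    norm_num
  · rw [if_neg hadj]
    unfold adjMatrix
    rw [if_neg hadj, zero_mul]

/-- Row equation of the eigenvector at the vertex `a`. -/
lemma row_a (Γ' : SignedGraph n) (x : Fin n → ℝ)
    (hx : Γ'.adjMatrix.mulVec x = Γ'.lambda1 • x) (a b : Fin n) (hab : Γ'.G.Adj a b)
    (hneg : Γ'.sign a b = -1)
    (huniq : ∀ j k, Γ'.G.Adj j k → Γ'.sign j k = -1 → s(j, k) = s(a, b)) :
    Γ'.lambda1 * x a = -(x b) + ∑ k, (if Γ'.G.Adj a k ∧ k ≠ b then x k else 0) := by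
  classical
  have hrow : ∑ k, Γ'.adjMatrix a k * x k = Γ'.lambda1 * x a := by
    have := congrFun hx a
    simpa [Matrix.mulVec, dotProduct] using this
  rw [← hrow]
  have hterm : ∀ k, Γ'.adjMatrix a k * x k
      = (if k = b then -(x b) else 0) + (if Γ'.G.Adj a k ∧ k ≠ b then x k else 0) := by
    intro k
    by_cases hkb : k = b
    · subst hkb
      rw [if_pos rfl, if_neg (fun h => h.2 rfl)]
      unfold adjMatrix
      rw [if_pos hab, hneg]
      norm_num
    · rw [if_neg hkb, zero_add]
      by_cases hadj : Γ'.G.Adj a k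
      · rw [if_pos ⟨hadj, hkb⟩]
        have hsign : Γ'.sign a k = 1 := by
          rcases Γ'.sign_pm a k hadj with h | h
          · exact h
          · exfalso
            have := huniq a k hadj h
            rw [Sym2.eq_iff] at this
            rcases this with ⟨-, h2⟩ | ⟨h1, -⟩
            · exact hkb h2
            · exact hab.ne h1
        unfold adjMatrix
        rw [if_pos hadj, hsign]
        norm_num
      · rw [if_neg (fun h => hadj h.1)]
        unfold adjMatrix
        rw [if_neg hadj, zero_mul]
  rw [Finset.sum_congr rfl (fun k _ => hterm k), Finset.sum_add_distrib]
  congr 1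
  simp [Finset.sum_ite_eq']

/-- zero spreads to neighbours, for a vertex away from `a, b`. -/
lemma zprop (Γ' : SignedGraph n) (x : Fin n → ℝ)
    (hx : Γ'.adjMatrix.mulVec x = Γ'.lambda1 • x) (hnn : ∀ i, 0 ≤ x i) (a b : Fin n)
    (huniq : ∀ j k, Γ'.G.Adj j k → Γ'.sign j k = -1 → s(j, k) = s(a, b))
    (j : Fin n) (hja : j ≠ a) (hjb : j ≠ b) (hxj : x j = 0) :
    ∀ k, Γ'.G.Adj j k → x k = 0 := by
  classical
  intro k hadj
  have h0 := Γ'.row_off x hx a b huniq j hja hjb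
  rw [hxj, mul_zero] at h0
  have hz := (Finset.sum_eq_zero_iff_of_nonneg (fun k _ => by
    by_cases h : Γ'.G.Adj j k
    · rw [if_pos h]; exact hnn k
    · rw [if_neg h])).mp h0 k (Finset.mem_univ k)
  rwa [if_pos hadj] at hz

lemma tweak_unbalanced_false (Γ' : SignedGraph n) (i u a : Fin n) (hnadj : ¬Γ'.G.Adj i u)
    (hub : Γ'.Unbalanced) : (Γ'.tweak i u a false).Unbalanced := by
  obtain ⟨v, c, hcyc, hsgn⟩ := hub
  have hle : ∀ e ∈ c.edges, e ∈ (Γ'.tweak i u a false).G.edgeSet := by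
    intro e he
    have hE := c.edges_subset_edgeSet he
    induction e using Sym2.ind with
    | _ p q =>
      rw [SimpleGraph.mem_edgeSet] at hE ⊢
      exact tweak_adj_of_old _ _ _ _ _ hE (fun hd => absurd hd (by simp))
  have hsigneq : ∀ e ∈ c.edges, (Γ'.tweak i u a false).signEdge e = Γ'.signEdge e := by
    intro e he
    have hE := c.edges_subset_edgeSet he
    induction e using Sym2.ind with
    | _ p q =>
      rw [SimpleGraph.mem_edgeSet] at hE
      rw [signEdge_mk, signEdge_mk]
      apply tweak_sign_eq
      rintro (⟨rfl, rfl⟩ | ⟨rfl, rfl⟩)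
      · exact hnadj hE
      · exact hnadj hE.symm
  exact ⟨v, c.transfer _ hle, transfer_isCycle c hle hcyc,
    by rw [walkSign_transfer Γ' _ c hle hsigneq]; exact hsgn⟩

/-- a negative triangle gives unbalancedness. -/
lemma triangle_unbalanced (Γ : SignedGraph n) (a b p : Fin n)
    (h1 : Γ.G.Adj a b) (h2 : Γ.G.Adj b p) (h3 : Γ.G.Adj p a)
    (s1 : Γ.sign a b = -1) (s2 : Γ.sign b p = 1) (s3 : Γ.sign p a = 1) :
    Γ.Unbalanced := by
  refine ⟨a, SimpleGraph.Walk.cons h1 (SimpleGraph.Walk.cons h2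
    (SimpleGraph.Walk.cons h3 SimpleGraph.Walk.nil)), ?_, ?_⟩
  · rw [SimpleGraph.Walk.isCycle_def]
    refine ⟨?_, by simp, ?_⟩
    · rw [SimpleGraph.Walk.isTrail_def]
      have e1 := h1.ne
      have e2 := h2.ne
      have e3 := h3.ne
      have e1' := h1.ne'
      have e2' := h2.ne'
      have e3' := h3.ne'
      simp only [SimpleGraph.Walk.edges_cons, SimpleGraph.Walk.edges_nil, List.nodup_cons,
        List.mem_cons, List.not_mem_nil, or_false, List.nodup_nil, and_true, not_or, Sym2.eq_iff]
      refine ⟨⟨?_, ?_⟩, ?_⟩ <;> tauto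
    · simp only [SimpleGraph.Walk.support_cons, SimpleGraph.Walk.support_nil, List.tail_cons,
        List.nodup_cons, List.mem_cons, List.not_mem_nil, or_false, List.nodup_nil, and_true,
        not_or]
      exact ⟨⟨h2.ne, fun h => h1.ne h.symm⟩, h3.ne, not_false⟩
  · unfold walkSign
    simp only [SimpleGraph.Walk.edges_cons, SimpleGraph.Walk.edges_nil, List.map_cons,
      List.map_nil, List.prod_cons, List.prod_nil, signEdge_mk, s1, s2, s3]
    norm_num

end SignedGraph

namespace SignedGraph
open scoped Classical
variable {n : ℕ}

lemma sign_one (Γ' : SignedGraph n) (a b : Fin n)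
    (huniq : ∀ j k, Γ'.G.Adj j k → Γ'.sign j k = -1 → s(j, k) = s(a, b))
    {j k : Fin n} (hadj : Γ'.G.Adj j k) (hne : ¬((j = a ∧ k = b) ∨ (j = b ∧ k = a))) :
    Γ'.sign j k = 1 := by
  rcases Γ'.sign_pm j k hadj with h | h
  · exact h
  · exfalso
    have := huniq j k hadj h
    rw [Sym2.eq_iff] at this
    exact hne this

open Matrix in
lemma lam_ge_one (hn : 0 < n) (Γ' : SignedGraph n) (hub : Γ'.Unbalanced) (a b : Fin n)
    (huniq : ∀ j k, Γ'.G.Adj j k → Γ'.sign j k = -1 → s(j, k) = s(a, b)) :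
    1 ≤ Γ'.lambda1 := by
  obtain ⟨v, c, hcyc, hsgn⟩ := hub
  have hpos : ∃ p q, Γ'.G.Adj p q ∧ Γ'.sign p q = 1 := by
    have hlen3 : 3 ≤ c.length := hcyc.three_le_length
    have hnodup : c.edges.Nodup := hcyc.isCircuit.isTrail.edges_nodup
    have hlen : 2 ≤ c.edges.length := by
      rw [SimpleGraph.Walk.length_edges]; omega
    have h0 : (0 : ℕ) < c.edges.length := by omega
    have h1 : (1 : ℕ) < c.edges.length := by omega
    set e1 := c.edges.get ⟨0, h0⟩ with he1
    set e2 := c.edges.get ⟨1, h1⟩ with he2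
    have hm1 : e1 ∈ c.edges := List.get_mem _ _
    have hm2 : e2 ∈ c.edges := List.get_mem _ _
    have hne12 : e1 ≠ e2 := by
      intro h
      have := (List.Nodup.get_inj_iff hnodup).mp h
      simp at this
    have key : ∃ e ∈ c.edges, e ≠ s(a,b) := by
      by_cases h : e1 = s(a,b)
      · exact ⟨e2, hm2, fun h2 => hne12 (h.trans h2.symm)⟩
      · exact ⟨e1, hm1, h⟩
    obtain ⟨e, he, hene⟩ := key
    have hE := c.edges_subset_edgeSet he
    induction e using Sym2.ind with
    | _ p q =>
      rw [SimpleGraph.mem_edgeSet] at hE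
      refine ⟨p, q, hE, Γ'.sign_one a b huniq hE ?_⟩
      intro h
      apply hene
      rw [Sym2.eq_iff]
      exact h
  obtain ⟨p, q, hadj, hsign⟩ := hpos
  have hpq : p ≠ q := hadj.ne
  have hApq : Γ'.adjMatrix p q = 1 := by
    unfold adjMatrix
    rw [if_pos hadj, hsign]; norm_num
  have hAqp : Γ'.adjMatrix q p = 1 := by
    unfold adjMatrix
    rw [if_pos hadj.symm, Γ'.sign_symm q p, hsign]; norm_num
  set z : Fin n → ℝ := fun j => (if j = p then 1 else 0) + (if j = q then 1 else 0) with hz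
  have hAz : ∀ j, (Γ'.adjMatrix *ᵥ z) j = Γ'.adjMatrix j p + Γ'.adjMatrix j q := by
    intro j
    show ∑ k, Γ'.adjMatrix j k * z k = _
    rw [hz]
    simp only [mul_add, mul_ite, mul_one, mul_zero, Finset.sum_add_distrib,
      Finset.sum_ite_eq', Finset.mem_univ, if_pos]
  have hdz : ∀ w : Fin n → ℝ, z ⬝ᵥ w = w p + w q := by
    intro w
    show ∑ k, z k * w k = _
    rw [hz]
    simp only [add_mul, ite_mul, one_mul, zero_mul, Finset.sum_add_distrib,
      Finset.sum_ite_eq', Finset.mem_univ, if_pos]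
  have hzAz : z ⬝ᵥ (Γ'.adjMatrix *ᵥ z) = 2 := by
    rw [hdz, hAz, hAz, hApq, hAqp, Γ'.adjMatrix_diag, Γ'.adjMatrix_diag]
    ring
  have hzz : z ⬝ᵥ z = 2 := by
    rw [hdz, hz]
    simp only [if_pos rfl, if_neg hpq, if_neg (Ne.symm hpq)]
    norm_num
  have hray := ray_sSup Γ'.adjMatrix hn Γ'.adjMatrix_isHermitian z
  rw [hzAz, hzz] at hray
  have : Γ'.lambda1 = sSup (spectrum ℝ Γ'.adjMatrix) := rfl
  rw [this]
  linarith

lemma caseB (hn : 0 < n) (Γ' : SignedGraph n) (hub : Γ'.Unbalanced)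
    (hfree : Γ'.NegC4Free)
    (hmax : ∀ Γ : SignedGraph n, Γ.Unbalanced → Γ.NegC4Free → Γ.lambda1 ≤ Γ'.lambda1)
    (x : Fin n → ℝ) (hx : Γ'.adjMatrix.mulVec x = Γ'.lambda1 • x)
    (hnn : ∀ j, 0 ≤ x j) (hunit : ∑ j, x j ^ 2 = 1) (hlam1 : 1 ≤ Γ'.lambda1)
    (a b : Fin n) (hab : Γ'.G.Adj a b) (hneg : Γ'.sign a b = -1)
    (huniq : ∀ j k, Γ'.G.Adj j k → Γ'.sign j k = -1 → s(j, k) = s(a, b))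
    (i : Fin n) (hia : i ≠ a) (hib : i ≠ b) (hxi : x i = 0) (hxb : 0 < x b) : False := by
  have hnbr : ∀ k, Γ'.G.Adj i k → x k = 0 := Γ'.zprop x hx hnn a b huniq i hia hib hxi
  have hnotib : ¬Γ'.G.Adj i b := fun h => (ne_of_gt hxb) (hnbr b h)
  by_cases hiaAdj : Γ'.G.Adj i a
  · have hxa : x a = 0 := hnbr a hiaAdj
    have hrowa := Γ'.row_a x hx a b hab hneg huniq
    rw [hxa, mul_zero] at hrowa
    have hSne : (∑ k, (if Γ'.G.Adj a k ∧ k ≠ b then x k else 0)) ≠ 0 := by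
      intro h
      rw [h] at hrowa
      linarith
    obtain ⟨p, -, hp⟩ := Finset.exists_ne_zero_of_sum_ne_zero hSne
    have hpadj : Γ'.G.Adj a p ∧ p ≠ b := by
      by_contra h; rw [if_neg h] at hp; exact hp rfl
    have hxpne : x p ≠ 0 := by rwa [if_pos hpadj] at hp
    have hxp : 0 < x p := lt_of_le_of_ne (hnn p) (Ne.symm hxpne)
    have hpa : p ≠ a := fun h => Γ'.G.irrefl (h ▸ hpadj.1)
    have hip : i ≠ p := fun h => hxpne (by rw [← h]; exact hxi)
    have hnadjip : ¬Γ'.G.Adj i p := fun h => hxpne (hnbr p h)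
    by_cases hpbAdj : Γ'.G.Adj p b
    · refine add_contra hn Γ' hfree hmax x hx hunit a b huniq i p hia hib hpa hpadj.2 hip
        hnadjip hxi hxp true (fun _ => hxa) ?_ ?_ ?_
      · apply (Γ'.tweak i p a true).triangle_unbalanced a b p
        · exact tweak_adj_of_old _ _ _ _ _ hab (fun _ => by
            rintro (⟨h, -⟩ | ⟨-, h⟩)
            · exact hia h.symm
            · exact hib h.symm)
        · exact tweak_adj_of_old _ _ _ _ _ hpbAdj.symm (fun _ => by
            rintro (⟨h, -⟩ | ⟨h, -⟩)
            · exact hib h.symm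
            · exact hab.ne' h)
        · exact tweak_adj_of_old _ _ _ _ _ hpadj.1.symm (fun _ => by
            rintro (⟨h, -⟩ | ⟨h, -⟩)
            · exact hip h.symm
            · exact hpa h)
        · rw [tweak_sign_eq _ _ _ _ _ _ _ (by
            rintro (⟨h, -⟩ | ⟨h, -⟩)
            · exact hia h.symm
            · exact hpa h.symm)]
          exact hneg
        · rw [tweak_sign_eq _ _ _ _ _ _ _ (by
            rintro (⟨h, -⟩ | ⟨h, -⟩)
            · exact hib h.symm
            · exact hpadj.2 h.symm)]
          exact Γ'.sign_one a b huniq hpbAdj.symm (by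
            rintro (⟨h, -⟩ | ⟨-, h⟩)
            · exact hab.ne' h
            · exact hpa h)
        · rw [tweak_sign_eq _ _ _ _ _ _ _ (by
            rintro (⟨h, -⟩ | ⟨-, h⟩)
            · exact hip h.symm
            · exact hia h.symm)]
          exact Γ'.sign_one a b huniq hpadj.1.symm (by
            rintro (⟨h, -⟩ | ⟨h, -⟩)
            · exact hpa h
            · exact hpadj.2 h)
      · rintro ⟨-, h2⟩
        refine hnotib (tweak_adj_old _ _ _ _ _ h2 ?_)
        rintro (⟨-, h⟩ | ⟨h, -⟩)
        · exact hpadj.2 h.symm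
        · exact hip h
      · rintro ⟨-, h2⟩
        rcases h2.2 with ⟨-, hd⟩ | hnew
        · exact hd rfl (Or.inl ⟨rfl, rfl⟩)
        · rcases hnew with ⟨-, h⟩ | ⟨h, -⟩
          · exact hpa h.symm
          · exact hip h
    · refine add_contra hn Γ' hfree hmax x hx hunit a b huniq i p hia hib hpa hpadj.2 hip
        hnadjip hxi hxp false (fun h => absurd h (by simp)) ?_ ?_ ?_
      · exact Γ'.tweak_unbalanced_false i p a hnadjip hub
      · rintro ⟨-, h2⟩
        refine hnotib (tweak_adj_old _ _ _ _ _ h2 ?_)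
        rintro (⟨-, h⟩ | ⟨h, -⟩)
        · exact hpadj.2 h.symm
        · exact hip h
      · rintro ⟨h1, -⟩
        refine hpbAdj (tweak_adj_old _ _ _ _ _ h1 ?_)
        rintro (⟨h, -⟩ | ⟨-, h⟩)
        · exact hip h.symm
        · exact hib h.symm
  · by_cases hexu : ∃ u, 0 < x u ∧ u ≠ a ∧ u ≠ b
    · obtain ⟨u, hxu, hua, hub2⟩ := hexu
      have hiu : i ≠ u := fun h => (ne_of_gt hxu) (by rw [← h]; exact hxi)
      have hnadjiu : ¬Γ'.G.Adj i u := fun h => (ne_of_gt hxu) (hnbr u h)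
      refine add_contra hn Γ' hfree hmax x hx hunit a b huniq i u hia hib hua hub2 hiu
        hnadjiu hxi hxu false (fun h => absurd h (by simp)) ?_ ?_ ?_
      · exact Γ'.tweak_unbalanced_false i u a hnadjiu hub
      · rintro ⟨-, h2⟩
        refine hnotib (tweak_adj_old _ _ _ _ _ h2 ?_)
        rintro (⟨-, h⟩ | ⟨h, -⟩)
        · exact hub2 h.symm
        · exact hiu h
      · rintro ⟨-, h2⟩
        refine hiaAdj (tweak_adj_old _ _ _ _ _ h2 ?_)
        rintro (⟨-, h⟩ | ⟨h, -⟩)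
        · exact hua h.symm
        · exact hiu h
    · push_neg at hexu
      have hswapuniq : ∀ j k, Γ'.G.Adj j k → Γ'.sign j k = -1 → s(j, k) = s(b, a) := by
        intro j k h1 h2
        rw [huniq j k h1 h2]
        exact Sym2.eq_swap
      have hrowb := Γ'.row_a x hx b a hab.symm (by rw [Γ'.sign_symm b a]; exact hneg) hswapuniq
      have hSzero : ∑ k, (if Γ'.G.Adj b k ∧ k ≠ a then x k else 0) = 0 := by
        apply Finset.sum_eq_zero
        intro k _
        by_cases h : Γ'.G.Adj b k ∧ k ≠ a
        · rw [if_pos h]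
          by_contra hne
          have hxk : 0 < x k := lt_of_le_of_ne (hnn k) (Ne.symm hne)
          have hkb := hexu k hxk h.2
          rw [hkb] at h
          exact Γ'.G.irrefl h.1
        · rw [if_neg h]
      rw [hSzero] at hrowb
      have h1 : 1 * x b ≤ Γ'.lambda1 * x b := mul_le_mul_of_nonneg_right hlam1 (hnn b)
      have h2 := hnn a
      linarith

lemma caseA (hn : 0 < n) (Γ' : SignedGraph n) (hub : Γ'.Unbalanced)
    (hfree : Γ'.NegC4Free)
    (hmax : ∀ Γ : SignedGraph n, Γ.Unbalanced → Γ.NegC4Free → Γ.lambda1 ≤ Γ'.lambda1)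
    (x : Fin n → ℝ) (hx : Γ'.adjMatrix.mulVec x = Γ'.lambda1 • x)
    (hnn : ∀ j, 0 ≤ x j) (hunit : ∑ j, x j ^ 2 = 1)
    (a b : Fin n) (hab : Γ'.G.Adj a b) (hneg : Γ'.sign a b = -1)
    (huniq : ∀ j k, Γ'.G.Adj j k → Γ'.sign j k = -1 → s(j, k) = s(a, b))
    (i : Fin n) (hia : i ≠ a) (hib : i ≠ b) (hxi : x i = 0)
    (hxa : x a = 0) (hxb : x b = 0) : False := by
  have hnbr : ∀ k, Γ'.G.Adj i k → x k = 0 := Γ'.zprop x hx hnn a b huniq i hia hib hxi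
  have nbrzero : ∀ (c d : Fin n), Γ'.G.Adj c d → Γ'.sign c d = -1 →
      (∀ j k, Γ'.G.Adj j k → Γ'.sign j k = -1 → s(j, k) = s(c, d)) →
      x c = 0 → x d = 0 → ∀ k, Γ'.G.Adj c k → x k = 0 := by
    intro c d hcd hnegcd huniqcd hxc hxd k hk
    have hrow := Γ'.row_a x hx c d hcd hnegcd huniqcd
    rw [hxc, hxd, mul_zero] at hrow
    have hS : ∑ k, (if Γ'.G.Adj c k ∧ k ≠ d then x k else 0) = 0 := by linarith
    by_cases hkd : k = d
    · rw [hkd]; exact hxd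
    · have := (Finset.sum_eq_zero_iff_of_nonneg (fun k _ => by
        by_cases h : Γ'.G.Adj c k ∧ k ≠ d
        · rw [if_pos h]; exact hnn k
        · rw [if_neg h])).mp hS k (Finset.mem_univ k)
      rwa [if_pos ⟨hk, hkd⟩] at this
  have hswapuniq : ∀ j k, Γ'.G.Adj j k → Γ'.sign j k = -1 → s(j, k) = s(b, a) := by
    intro j k h1 h2
    rw [huniq j k h1 h2]
    exact Sym2.eq_swap
  have hnbra : ∀ k, Γ'.G.Adj a k → x k = 0 := nbrzero a b hab hneg huniq hxa hxb
  have hnbrb : ∀ k, Γ'.G.Adj b k → x k = 0 :=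
    nbrzero b a hab.symm (by rw [Γ'.sign_symm b a]; exact hneg) hswapuniq hxb hxa
  obtain ⟨u, hxu⟩ : ∃ u, 0 < x u := by
    by_contra h
    push_neg at h
    have hz : ∀ j, x j = 0 := fun j => le_antisymm (h j) (hnn j)
    have : (1:ℝ) = 0 := by
      rw [← hunit]
      apply Finset.sum_eq_zero
      intro j _
      rw [hz j]
      ring
    norm_num at this
  have hua : u ≠ a := fun h => (ne_of_gt hxu) (by rw [h]; exact hxa)
  have hub2 : u ≠ b := fun h => (ne_of_gt hxu) (by rw [h]; exact hxb)
  have hiu : i ≠ u := fun h => (ne_of_gt hxu) (by rw [← h]; exact hxi)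
  have hnadjiu : ¬Γ'.G.Adj i u := fun h => (ne_of_gt hxu) (hnbr u h)
  have hnua : ¬Γ'.G.Adj u a := fun h => (ne_of_gt hxu) (hnbra u h.symm)
  have hnub : ¬Γ'.G.Adj u b := fun h => (ne_of_gt hxu) (hnbrb u h.symm)
  refine add_contra hn Γ' hfree hmax x hx hunit a b huniq i u hia hib hua hub2 hiu
    hnadjiu hxi hxu false (fun h => absurd h (by simp)) ?_ ?_ ?_
  · exact Γ'.tweak_unbalanced_false i u a hnadjiu hub
  · rintro ⟨h1, -⟩
    refine hnua (tweak_adj_old _ _ _ _ _ h1 ?_)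
    rintro (⟨h, -⟩ | ⟨-, h⟩)
    · exact hiu h.symm
    · exact hia h.symm
  · rintro ⟨h1, -⟩
    refine hnub (tweak_adj_old _ _ _ _ _ h1 ?_)
    rintro (⟨h, -⟩ | ⟨-, h⟩)
    · exact hiu h.symm
    · exact hib h.symm

end SignedGraph


theorem extremal_coordinates_positive (n : ℕ) (hn : 6 ≤ n) (Γ' : SignedGraph n)
    (hub : Γ'.Unbalanced) (hfree : Γ'.NegC4Free)
    (hmax : ∀ Γ : SignedGraph n, Γ.Unbalanced → Γ.NegC4Free → Γ.lambda1 ≤ Γ'.lambda1)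
    (x : Fin n → ℝ) (hx : Γ'.adjMatrix.mulVec x = Γ'.lambda1 • x)
    (hnn : ∀ i, 0 ≤ x i) (hunit : ∑ i, x i ^ 2 = 1)
    (a b : Fin n) (hab : Γ'.G.Adj a b) (hneg : Γ'.sign a b = -1)
    (huniq : ∀ i j, Γ'.G.Adj i j → Γ'.sign i j = -1 → s(i, j) = s(a, b)) :
    ∀ i, i ≠ a → i ≠ b → 0 < x i := by
  intro i hia hib
  rcases lt_or_eq_of_le (hnn i) with h | h
  · exact h
  · exfalso
    have hxi : x i = 0 := h.symm
    have hn0 : 0 < n := by omega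
    have hlam1 : 1 ≤ Γ'.lambda1 := SignedGraph.lam_ge_one hn0 Γ' hub a b huniq
    by_cases hxb : 0 < x b
    · exact SignedGraph.caseB hn0 Γ' hub hfree hmax x hx hnn hunit hlam1 a b hab hneg huniq
        i hia hib hxi hxb
    · by_cases hxa : 0 < x a
      · have hneg' : Γ'.sign b a = -1 := by rw [Γ'.sign_symm b a]; exact hneg
        have huniq' : ∀ j k, Γ'.G.Adj j k → Γ'.sign j k = -1 → s(j, k) = s(b, a) := by
          intro j k h1 h2
          rw [huniq j k h1 h2]
          exact Sym2.eq_swap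
        exact SignedGraph.caseB hn0 Γ' hub hfree hmax x hx hnn hunit hlam1 b a hab.symm hneg'
          huniq' i hib hia hxi hxa
      · exact SignedGraph.caseA hn0 Γ' hub hfree hmax x hx hnn hunit a b hab hneg huniq
          i hia hib hxi (le_antisymm (not_lt.mp hxa) (hnn a)) (le_antisymm (not_lt.mp hxb) (hnn b))
end
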